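/- arXiv:1606.01371 — 15 statements merged into one kernel-verified Lean document; each statement's English description precedes it below -/
import Mathlib

section
/- Under a regular discrete choice model, for any optimal assortment S* and any revenue level r_i, the revenue of the revenue-ordered assortment S_i = {x ∈ C : r(x) ≥ r_i} satisfies ∑_{x∈S_i} P(x,S_i)·r(x) ≥ r_i · ∑_{x ∈ S* ∩ S_i} P(x,S*). -/
open Finset

open scoped Classical in
/-- The technical bound: the revenue of the revenue-ordered assortment
`Sᵢ = {x : rᵢ ≤ r x}` is at least `rᵢ` times the probability mass that an
arbitrary (e.g. optimal) assortment `S*` puts on products of revenue at least `rᵢ`. -/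
theorem stmt1 {α : Type*} [Fintype α] [DecidableEq α]
    (P : α → Finset α → ℝ) (r : α → ℝ)
    (hr : ∀ x, 0 < r x)
    (h_nonneg : ∀ (x : α) (S : Finset α), 0 ≤ P x S)
    (h_vanish : ∀ (x : α) (S : Finset α), x ∉ S → P x S = 0)
    (h_sum : ∀ S : Finset α, ∑ x ∈ S, P x S ≤ 1)
    (h_reg : ∀ S S' : Finset α, S ⊆ S' → ∀ x ∈ S, P x S' ≤ P x S)
    (h_reg0 : ∀ S S' : Finset α, S ⊆ S' →
      1 - ∑ x ∈ S', P x S' ≤ 1 - ∑ x ∈ S, P x S)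
    (Sstar : Finset α) (ri : ℝ) (hri : ∃ x : α, r x = ri) :
    ri * ∑ x ∈ Sstar ∩ Finset.univ.filter (fun x => ri ≤ r x), P x Sstar ≤
      ∑ x ∈ Finset.univ.filter (fun x => ri ≤ r x),
        P x (Finset.univ.filter (fun x => ri ≤ r x)) * r x := by
  obtain ⟨x0, hx0⟩ := hri
  have hri_pos : 0 < ri := hx0 ▸ hr x0
  set Si := Finset.univ.filter (fun x => ri ≤ r x) with hSi
  set T := Sstar ∩ Si with hT
  have hTSi : T ⊆ Si := inter_subset_right
  have hTS : T ⊆ Sstar := inter_subset_left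
  have h1 : ∑ x ∈ T, P x Sstar ≤ ∑ x ∈ T, P x T :=
    Finset.sum_le_sum fun x hx => h_reg T Sstar hTS x hx
  have h2 : ∑ x ∈ T, P x T ≤ ∑ x ∈ Si, P x Si := by
    have := h_reg0 T Si hTSi
    linarith
  have h3 : ri * ∑ x ∈ Si, P x Si ≤ ∑ x ∈ Si, P x Si * r x := by
    rw [Finset.mul_sum]
    refine Finset.sum_le_sum fun x hx => ?_
    have hx' : ri ≤ r x := (Finset.mem_filter.mp hx).2
    have := h_nonneg x Si
    nlinarith
  calc ri * ∑ x ∈ T, P x Sstar ≤ ri * ∑ x ∈ Si, P x Si := by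
        apply mul_le_mul_of_nonneg_left (le_trans h1 h2) hri_pos.le
    _ ≤ ∑ x ∈ Si, P x Si * r x := h3
end

section
/- Under a regular discrete choice model with k distinct product revenues, the revenue-ordered assortments strategy achieves revenue at least OPT/k; that is, max over i of the revenue of S_i = {x : r(x) ≥ r_i} is at least (1/k)·max over all S ⊆ C of ∑_{x∈S} P(x,S)r(x). -/
open Finset

open scoped Classical in
/-- Under a regular discrete choice model with `k` distinct revenues, some
revenue-ordered assortment achieves at least `1/k` of the revenue of any assortment. -/
theorem stmt2 {α : Type*} [Fintype α] [DecidableEq α]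
    (P : α → Finset α → ℝ) (r : α → ℝ)
    (hr : ∀ x, 0 < r x)
    (h_nonneg : ∀ (x : α) (S : Finset α), 0 ≤ P x S)
    (h_vanish : ∀ (x : α) (S : Finset α), x ∉ S → P x S = 0)
    (h_sum : ∀ S : Finset α, ∑ x ∈ S, P x S ≤ 1)
    (h_reg : ∀ S S' : Finset α, S ⊆ S' → ∀ x ∈ S, P x S' ≤ P x S)
    (h_reg0 : ∀ S S' : Finset α, S ⊆ S' →
      1 - ∑ x ∈ S', P x S' ≤ 1 - ∑ x ∈ S, P x S)
    (k : ℕ) (hk : 0 < k)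
    (hcard : (Finset.univ.image r).card = k) :
    ∀ S : Finset α, ∃ v ∈ Finset.univ.image r,
      ∑ x ∈ S, P x S * r x ≤
        (k : ℝ) * ∑ x ∈ Finset.univ.filter (fun x => v ≤ r x),
          P x (Finset.univ.filter (fun x => v ≤ r x)) * r x := by
  intro S
  set V := Finset.univ.image r with hV
  set f : ℝ → ℝ := fun w => ∑ x ∈ Finset.univ.filter (fun x => w ≤ r x),
      P x (Finset.univ.filter (fun x => w ≤ r x)) * r x with hf
  have hVne : V.Nonempty := by
    rw [← Finset.card_pos, hcard]; exact hk
  obtain ⟨v, hvV, hvmax⟩ := V.exists_max_image f hVne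
  refine ⟨v, hvV, ?_⟩
  -- key bound for each value w
  have key : ∀ w ∈ V, ∑ x ∈ S.filter (fun x => r x = w), P x S * r x ≤ f w := by
    intro w hwV
    obtain ⟨y, -, hy⟩ := Finset.mem_image.mp hwV
    have hw0 : 0 < w := hy ▸ hr y
    set T := S.filter (fun x => w ≤ r x) with hT
    set U := Finset.univ.filter (fun x => w ≤ r x) with hU
    have hTS : T ⊆ S := Finset.filter_subset _ _
    have hTU : T ⊆ U := by
      intro x hx
      simp only [hT, hU, Finset.mem_filter] at hx ⊢
      exact ⟨Finset.mem_univ x, hx.2⟩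
    have e1 : ∑ x ∈ S.filter (fun x => r x = w), P x S * r x
        = w * ∑ x ∈ S.filter (fun x => r x = w), P x S := by
      rw [Finset.mul_sum]
      refine Finset.sum_congr rfl fun x hx => ?_
      have := (Finset.mem_filter.mp hx).2
      rw [this]; ring
    have a1 : ∑ x ∈ S.filter (fun x => r x = w), P x S ≤ ∑ x ∈ T, P x S := by
      refine Finset.sum_le_sum_of_subset_of_nonneg ?_ (fun x _ _ => h_nonneg x S)
      intro x hx
      have hx' := Finset.mem_filter.mp hx
      exact Finset.mem_filter.mpr ⟨hx'.1, le_of_eq hx'.2.symm⟩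
    have a2 : ∑ x ∈ T, P x S ≤ ∑ x ∈ T, P x T :=
      Finset.sum_le_sum fun x hx => h_reg T S hTS x hx
    have a3 : ∑ x ∈ T, P x T ≤ ∑ x ∈ U, P x U := by
      have := h_reg0 T U hTU; linarith
    have a4 : w * ∑ x ∈ U, P x U ≤ f w := by
      rw [hf, Finset.mul_sum]
      refine Finset.sum_le_sum fun x hx => ?_
      have hxw : w ≤ r x := (Finset.mem_filter.mp hx).2
      calc w * P x U ≤ r x * P x U :=
            mul_le_mul_of_nonneg_right hxw (h_nonneg x U)
        _ = P x U * r x := mul_comm _ _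
    calc ∑ x ∈ S.filter (fun x => r x = w), P x S * r x
        = w * ∑ x ∈ S.filter (fun x => r x = w), P x S := e1
      _ ≤ w * ∑ x ∈ U, P x U := by
          refine mul_le_mul_of_nonneg_left ?_ hw0.le
          exact le_trans a1 (le_trans a2 a3)
      _ ≤ f w := a4
  have h1 : ∑ x ∈ S, P x S * r x
      = ∑ w ∈ V, ∑ x ∈ S.filter (fun x => r x = w), P x S * r x := by
    exact (Finset.sum_fiberwise_of_maps_to
      (fun x _ => Finset.mem_image_of_mem r (Finset.mem_univ x)) _).symm
  calc ∑ x ∈ S, P x S * r x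
      = ∑ w ∈ V, ∑ x ∈ S.filter (fun x => r x = w), P x S * r x := h1
    _ ≤ ∑ w ∈ V, f w := Finset.sum_le_sum key
    _ ≤ ∑ _w ∈ V, f v := Finset.sum_le_sum fun w hw => hvmax w hw
    _ = (V.card : ℝ) * f v := by rw [Finset.sum_const, nsmul_eq_mul]
    _ = (k : ℝ) * f v := by rw [hcard]
end

section
/- Under a regular discrete choice model with distinct revenues r_1 < ... < r_k, the revenue-ordered assortments strategy achieves revenue at least OPT / (∑_{i=1}^{k} (r_i − r_{i−1})/r_i) (with r_0 := 0), and hence at least OPT/(1 + ln(r_k/r_1)). -/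
open Finset

/-- Telescoping sum over `Icc (m+1) n`. -/
theorem telesc2 (f : ℕ → ℝ) (m n : ℕ) (h : m ≤ n) :
    ∑ j ∈ Finset.Icc (m+1) n, (f j - f (j-1)) = f n - f m := by
  rw [← Finset.Ico_add_one_right_eq_Icc, Finset.sum_Ico_eq_sum_range]
  have h1 : ∀ i ∈ Finset.range (n + 1 - (m+1)),
      f (m+1+i) - f (m+1+i-1) = (fun i => f (m+i)) (i+1) - (fun i => f (m+i)) i := by
    intro i _; simp only; congr 2 <;> omega
  rw [Finset.sum_congr rfl h1, Finset.sum_range_sub (fun i => f (m+i))]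
  have h2 : m + (n + 1 - (m+1)) = n := by omega
  rw [h2]; simp

open scoped Classical in
/-- Under a regular discrete choice model whose revenue function takes exactly the
distinct values `rv 1 < ... < rv k`, some revenue-ordered assortment achieves
revenue at least `OPT / ∑_{i=1}^k (rvᵢ − rv_{i−1})/rvᵢ`, hence at least
`OPT / (1 + ln (rv k / rv 1))`. -/
theorem stmt4 {α : Type*} [Fintype α] [DecidableEq α]
    (P : α → Finset α → ℝ) (r : α → ℝ)
    (hr : ∀ x, 0 < r x)
    (h_nonneg : ∀ (x : α) (S : Finset α), 0 ≤ P x S)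
    (h_vanish : ∀ (x : α) (S : Finset α), x ∉ S → P x S = 0)
    (h_sum : ∀ S : Finset α, ∑ x ∈ S, P x S ≤ 1)
    (h_reg : ∀ S S' : Finset α, S ⊆ S' → ∀ x ∈ S, P x S' ≤ P x S)
    (h_reg0 : ∀ S S' : Finset α, S ⊆ S' →
      1 - ∑ x ∈ S', P x S' ≤ 1 - ∑ x ∈ S, P x S)
    (k : ℕ) (hk : 1 ≤ k) (rv : ℕ → ℝ)
    (hrv0 : rv 0 = 0)
    (hrvmono : ∀ i j, 1 ≤ i → i < j → j ≤ k → rv i < rv j)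
    (hvals : Finset.univ.image r = (Finset.Icc 1 k).image rv) :
    ∀ S : Finset α, ∃ i ∈ Finset.Icc 1 k,
      (∑ x ∈ S, P x S * r x ≤
        (∑ j ∈ Finset.Icc 1 k, (rv j - rv (j - 1)) / rv j) *
          ∑ x ∈ Finset.univ.filter (fun x => rv i ≤ r x),
            P x (Finset.univ.filter (fun x => rv i ≤ r x)) * r x) ∧
      (∑ x ∈ S, P x S * r x ≤
        (1 + Real.log (rv k / rv 1)) *
          ∑ x ∈ Finset.univ.filter (fun x => rv i ≤ r x),
            P x (Finset.univ.filter (fun x => rv i ≤ r x)) * r x) := by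
  intro S
  set Sj : ℕ → Finset α := fun j => Finset.univ.filter (fun x => rv j ≤ r x) with hSj
  set R : Finset α → ℝ := fun T => ∑ x ∈ T, P x T * r x with hRdef
  -- positivity of rv on [1, k]
  have hrvpos : ∀ j ∈ Finset.Icc 1 k, 0 < rv j := by
    intro j hj
    have h1 : rv j ∈ (Finset.Icc 1 k).image rv := Finset.mem_image_of_mem rv hj
    rw [← hvals] at h1
    obtain ⟨x, -, hx⟩ := Finset.mem_image.mp h1
    rw [← hx]; exact hr x
  have hRnonneg : ∀ T : Finset α, 0 ≤ R T := fun T =>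
    Finset.sum_nonneg fun x _ => mul_nonneg (h_nonneg x T) (hr x).le
  have hdiff : ∀ j ∈ Finset.Icc 1 k, 0 ≤ rv j - rv (j-1) := by
    intro j hj
    simp only [Finset.mem_Icc] at hj
    rcases eq_or_lt_of_le hj.1 with h1 | h1
    · rw [← h1]
      simp only [Nat.sub_self, hrv0, sub_zero]
      exact (hrvpos 1 (by simp [hk])).le
    · have := hrvmono (j-1) j (by omega) (by omega) hj.2
      linarith
  -- step 1: regularity bound
  have hstep : ∀ j, ∑ x ∈ S.filter (fun x => rv j ≤ r x), P x S ≤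
      ∑ x ∈ Sj j, P x (Sj j) := by
    intro j
    set T := S.filter (fun x => rv j ≤ r x) with hT
    have hTsub : T ⊆ Sj j := by
      intro x hx
      simp only [hT, Finset.mem_filter] at hx
      simp only [hSj, Finset.mem_filter, Finset.mem_univ, true_and]
      exact hx.2
    calc ∑ x ∈ T, P x S ≤ ∑ x ∈ T, P x T :=
          Finset.sum_le_sum fun x hx => h_reg T S (Finset.filter_subset _ _) x hx
      _ ≤ ∑ x ∈ Sj j, P x (Sj j) := by
          have := h_reg0 T (Sj j) hTsub; linarith
  -- step 2: revenue of Sj j at least rv j times its total probability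
  have hq : ∀ j ∈ Finset.Icc 1 k, rv j * ∑ x ∈ Sj j, P x (Sj j) ≤ R (Sj j) := by
    intro j hj
    rw [Finset.mul_sum]
    apply Finset.sum_le_sum
    intro x hx
    simp only [hSj, Finset.mem_filter] at hx
    have h1 := h_nonneg x (Sj j)
    nlinarith [hx.2]
  -- pick the best revenue-ordered assortment
  obtain ⟨i, hi, hmax⟩ := Finset.exists_max_image (Finset.Icc 1 k)
    (fun j => R (Sj j)) ⟨1, by simp [hk]⟩
  -- rewrite the revenue of S
  have hRS : R S = ∑ j ∈ Finset.Icc 1 k,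
      (rv j - rv (j-1)) * ∑ x ∈ S.filter (fun x => rv j ≤ r x), P x S := by
    have hrx : ∀ x : α, r x =
        ∑ j ∈ (Finset.Icc 1 k).filter (fun j => rv j ≤ r x), (rv j - rv (j-1)) := by
      intro x
      have hx : r x ∈ (Finset.Icc 1 k).image rv := by
        rw [← hvals]; exact Finset.mem_image_of_mem r (Finset.mem_univ x)
      obtain ⟨t, ht, hrt⟩ := Finset.mem_image.mp hx
      simp only [Finset.mem_Icc] at ht
      have hfil : (Finset.Icc 1 k).filter (fun j => rv j ≤ r x) = Finset.Icc 1 t := by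
        ext j
        simp only [Finset.mem_filter, Finset.mem_Icc, ← hrt]
        constructor
        · rintro ⟨⟨h1, h2⟩, h3⟩
          refine ⟨h1, ?_⟩
          by_contra h
          exact absurd h3 (not_le.mpr (hrvmono t j ht.1 (by omega) h2))
        · rintro ⟨h1, h2⟩
          refine ⟨⟨h1, le_trans h2 ht.2⟩, ?_⟩
          rcases eq_or_lt_of_le h2 with h | h
          · rw [h]
          · exact (hrvmono j t h1 h ht.2).le
      rw [hfil]
      rw [show Finset.Icc 1 t = Finset.Icc (0+1) t from rfl,
        telesc2 rv 0 t (Nat.zero_le t), hrv0, ← hrt]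
      ring
    calc R S = ∑ x ∈ S, ∑ j ∈ (Finset.Icc 1 k).filter (fun j => rv j ≤ r x),
            P x S * (rv j - rv (j-1)) := by
          refine Finset.sum_congr rfl fun x _ => ?_
          rw [← Finset.mul_sum, ← hrx x]
      _ = ∑ x ∈ S, ∑ j ∈ Finset.Icc 1 k,
            if rv j ≤ r x then P x S * (rv j - rv (j-1)) else 0 := by
          refine Finset.sum_congr rfl fun x _ => ?_
          rw [Finset.sum_filter]
      _ = ∑ j ∈ Finset.Icc 1 k, ∑ x ∈ S,
            if rv j ≤ r x then P x S * (rv j - rv (j-1)) else 0 := Finset.sum_comm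
      _ = ∑ j ∈ Finset.Icc 1 k,
            (rv j - rv (j-1)) * ∑ x ∈ S.filter (fun x => rv j ≤ r x), P x S := by
          refine Finset.sum_congr rfl fun j _ => ?_
          rw [Finset.mul_sum, Finset.sum_filter]
          refine Finset.sum_congr rfl fun x _ => ?_
          split <;> ring
  -- main bound
  have key : R S ≤ (∑ j ∈ Finset.Icc 1 k, (rv j - rv (j-1)) / rv j) * R (Sj i) := by
    rw [hRS, Finset.sum_mul]
    apply Finset.sum_le_sum
    intro j hj
    have h1 := hstep j
    have h2 := hq j hj
    have h3 : R (Sj j) ≤ R (Sj i) := hmax j hj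
    have h4 := hdiff j hj
    have h5 := hrvpos j hj
    have h6 : ∑ x ∈ S.filter (fun x => rv j ≤ r x), P x S ≤ R (Sj j) / rv j := by
      rw [le_div_iff₀ h5]
      nlinarith
    calc (rv j - rv (j-1)) * ∑ x ∈ S.filter (fun x => rv j ≤ r x), P x S
        ≤ (rv j - rv (j-1)) * (R (Sj j) / rv j) := mul_le_mul_of_nonneg_left h6 h4
      _ ≤ (rv j - rv (j-1)) * (R (Sj i) / rv j) := by
          apply mul_le_mul_of_nonneg_left _ h4
          gcongr
      _ = (rv j - rv (j-1)) / rv j * R (Sj i) := by ring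
  -- bound on the factor
  have fbound : ∑ j ∈ Finset.Icc 1 k, (rv j - rv (j-1)) / rv j ≤
      1 + Real.log (rv k / rv 1) := by
    have hp1 : 0 < rv 1 := hrvpos 1 (by simp [hk])
    have hpk : 0 < rv k := hrvpos k (by simp [hk])
    have hsplit : Finset.Icc 1 k = insert 1 (Finset.Icc 2 k) := by
      ext j; simp only [Finset.mem_insert, Finset.mem_Icc]; omega
    rw [hsplit, Finset.sum_insert (by simp)]
    have hterm1 : (rv 1 - rv (1-1)) / rv 1 = 1 := by
      simp only [Nat.sub_self, hrv0, sub_zero]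
      field_simp
    have hlog : ∑ j ∈ Finset.Icc 2 k, (rv j - rv (j-1)) / rv j ≤
        Real.log (rv k / rv 1) := by
      have hle : ∀ j ∈ Finset.Icc 2 k, (rv j - rv (j-1)) / rv j ≤
          Real.log (rv j) - Real.log (rv (j-1)) := by
        intro j hj
        simp only [Finset.mem_Icc] at hj
        have hpj : 0 < rv j := hrvpos j (by simp only [Finset.mem_Icc]; omega)
        have hpj1 : 0 < rv (j-1) := hrvpos (j-1) (by simp only [Finset.mem_Icc]; omega)
        have hl := Real.log_le_sub_one_of_pos (div_pos hpj1 hpj)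
        rw [Real.log_div hpj1.ne' hpj.ne'] at hl
        have hdiv : (rv j - rv (j-1)) / rv j = 1 - rv (j-1) / rv j := by
          field_simp
        rw [hdiv]; linarith
      calc ∑ j ∈ Finset.Icc 2 k, (rv j - rv (j-1)) / rv j
          ≤ ∑ j ∈ Finset.Icc 2 k, (Real.log (rv j) - Real.log (rv (j-1))) :=
            Finset.sum_le_sum hle
        _ = Real.log (rv k) - Real.log (rv 1) := by
            rw [show Finset.Icc 2 k = Finset.Icc (1+1) k from rfl]
            exact telesc2 (fun j => Real.log (rv j)) 1 k hk
        _ = Real.log (rv k / rv 1) := (Real.log_div hpk.ne' hp1.ne').symm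
    linarith
  refine ⟨i, hi, key, ?_⟩
  calc R S ≤ (∑ j ∈ Finset.Icc 1 k, (rv j - rv (j-1)) / rv j) * R (Sj i) := key
    _ ≤ (1 + Real.log (rv k / rv 1)) * R (Sj i) :=
        mul_le_mul_of_nonneg_right fbound (hRnonneg (Sj i))
end

section
/- Under a regular discrete choice model, let S* be an optimal assortment and for each i ∈ [k] define N_i = ∑_{x ∈ S*, r(x) ≥ r_i} P(x,S*). If N_1 > 0 and ℓ is the largest index with N_ℓ > 0, then the revenue of the best revenue-ordered assortment is at least OPT / (∑_{i=1}^{ℓ} (N_i − N_{i+1})/N_i) (with N_{ℓ+1} interpreted as N_{ℓ+1} if ℓ < k and 0 if ℓ = k), which is at least OPT/(1 + ln(N_1/N_ℓ)). -/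
open Finset

open scoped Classical in
/-- Under a regular discrete choice model, with `S*` an optimal assortment,
`N i` the probability mass that `S*` puts on products of revenue at least `rv i`
(and `N i = 0` for `i > k`), `N 1 > 0`, and `ℓ` the largest index in `[k]` with
`N ℓ > 0`, some revenue-ordered assortment achieves revenue at least
`OPT / ∑_{i=1}^ℓ (Nᵢ − N_{i+1})/Nᵢ`, hence at least `OPT / (1 + ln (N 1 / N ℓ))`. -/
theorem stmt5 {α : Type*} [Fintype α] [DecidableEq α]
    (P : α → Finset α → ℝ) (r : α → ℝ)
    (hr : ∀ x, 0 < r x)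
    (h_nonneg : ∀ (x : α) (S : Finset α), 0 ≤ P x S)
    (h_vanish : ∀ (x : α) (S : Finset α), x ∉ S → P x S = 0)
    (h_sum : ∀ S : Finset α, ∑ x ∈ S, P x S ≤ 1)
    (h_reg : ∀ S S' : Finset α, S ⊆ S' → ∀ x ∈ S, P x S' ≤ P x S)
    (h_reg0 : ∀ S S' : Finset α, S ⊆ S' →
      1 - ∑ x ∈ S', P x S' ≤ 1 - ∑ x ∈ S, P x S)
    (k : ℕ) (hk : 1 ≤ k) (rv : ℕ → ℝ)
    (hrvmono : ∀ i j, 1 ≤ i → i < j → j ≤ k → rv i < rv j)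
    (hvals : Finset.univ.image r = (Finset.Icc 1 k).image rv)
    (Sstar : Finset α)
    (hopt : ∀ S : Finset α, ∑ x ∈ S, P x S * r x ≤ ∑ x ∈ Sstar, P x Sstar * r x)
    (N : ℕ → ℝ)
    (hN : ∀ i, N i =
      if i ≤ k then ∑ x ∈ Sstar.filter (fun x => rv i ≤ r x), P x Sstar else 0)
    (ℓ : ℕ) (hℓmem : ℓ ∈ Finset.Icc 1 k)
    (hN1 : 0 < N 1) (hNℓ : 0 < N ℓ)
    (hℓmax : ∀ i ∈ Finset.Icc 1 k, 0 < N i → i ≤ ℓ) :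
    ∃ i ∈ Finset.Icc 1 k,
      (∑ x ∈ Sstar, P x Sstar * r x ≤
        (∑ j ∈ Finset.Icc 1 ℓ, (N j - N (j + 1)) / N j) *
          ∑ x ∈ Finset.univ.filter (fun x => rv i ≤ r x),
            P x (Finset.univ.filter (fun x => rv i ≤ r x)) * r x) ∧
      (∑ x ∈ Sstar, P x Sstar * r x ≤
        (1 + Real.log (N 1 / N ℓ)) *
          ∑ x ∈ Finset.univ.filter (fun x => rv i ≤ r x),
            P x (Finset.univ.filter (fun x => rv i ≤ r x)) * r x) := by

  classical
  obtain ⟨hℓ1, hℓk⟩ := Finset.mem_Icc.mp hℓmem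
  -- rv is monotone (non-strict) and injective on [1,k]
  have hrvle : ∀ i j, 1 ≤ i → i ≤ j → j ≤ k → rv i ≤ rv j := by
    intro i j h1 hij hjk
    rcases eq_or_lt_of_le hij with h | h
    · rw [h]
    · exact (hrvmono i j h1 h hjk).le
  have hinj : ∀ a b, 1 ≤ a → a ≤ k → 1 ≤ b → b ≤ k → rv a = rv b → a = b := by
    intro a b ha1 hak hb1 hbk hab
    rcases lt_trichotomy a b with h | h | h
    · exact absurd hab (ne_of_lt (hrvmono a b ha1 h hbk))
    · exact h
    · exact absurd hab.symm (ne_of_lt (hrvmono b a hb1 h hak))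
  have hrx : ∀ x : α, ∃ j, (1 ≤ j ∧ j ≤ k) ∧ rv j = r x := by
    intro x
    have hx : r x ∈ Finset.univ.image r := Finset.mem_image_of_mem r (Finset.mem_univ x)
    rw [hvals] at hx
    obtain ⟨j, hj, hje⟩ := Finset.mem_image.mp hx
    exact ⟨j, Finset.mem_Icc.mp hj, hje⟩
  have hrvpos : ∀ i, 1 ≤ i → i ≤ k → 0 < rv i := by
    intro i h1 h2
    have hx : rv i ∈ (Finset.Icc 1 k).image rv :=
      Finset.mem_image_of_mem rv (Finset.mem_Icc.mpr ⟨h1, h2⟩)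
    rw [← hvals] at hx
    obtain ⟨x, _, hxe⟩ := Finset.mem_image.mp hx
    rw [← hxe]; exact hr x
  have hNnonneg : ∀ i, 0 ≤ N i := by
    intro i
    rw [hN]
    split
    · exact Finset.sum_nonneg fun x _ => h_nonneg x Sstar
    · exact le_refl 0
  have hNmono : ∀ i j, 1 ≤ i → i ≤ j → N j ≤ N i := by
    intro i j h1 hij
    by_cases hjk : j ≤ k
    · have hik : i ≤ k := le_trans hij hjk
      rw [hN i, hN j, if_pos hik, if_pos hjk]
      apply Finset.sum_le_sum_of_subset_of_nonneg
      · intro x hx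
        rw [Finset.mem_filter] at hx ⊢
        exact ⟨hx.1, le_trans (hrvle i j h1 hij hjk) hx.2⟩
      · intro x _ _; exact h_nonneg x Sstar
    · rw [hN j, if_neg hjk]; exact hNnonneg i
  have hNzero : ∀ i, ℓ < i → N i = 0 := by
    intro i hi
    by_cases hik : i ≤ k
    · have hmem : i ∈ Finset.Icc 1 k := Finset.mem_Icc.mpr ⟨le_trans hℓ1 hi.le, hik⟩
      by_contra h
      have := hℓmax i hmem (lt_of_le_of_ne (hNnonneg i) (Ne.symm h))
      omega
    · rw [hN i, if_neg hik]
  have hNpos : ∀ i, 1 ≤ i → i ≤ ℓ → 0 < N i := fun i h1 h2 =>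
    lt_of_lt_of_le hNℓ (hNmono i ℓ h1 h2)
  -- Claim A: revenue-ordered set T i earns at least rv i * N i
  have claimA : ∀ i, 1 ≤ i → i ≤ k →
      rv i * N i ≤ ∑ x ∈ Finset.univ.filter (fun x => rv i ≤ r x),
        P x (Finset.univ.filter (fun x => rv i ≤ r x)) * r x := by
    intro i h1 hik
    set T := Finset.univ.filter (fun x => rv i ≤ r x) with hTdef
    set Bi := Sstar.filter (fun x => rv i ≤ r x) with hBdef
    have hNi : N i = ∑ x ∈ Bi, P x Sstar := by rw [hN, if_pos hik]
    have hsub1 : Bi ⊆ Sstar := Finset.filter_subset _ _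
    have hsub2 : Bi ⊆ T := by
      intro x hx
      rw [hBdef, Finset.mem_filter] at hx
      rw [hTdef, Finset.mem_filter]
      exact ⟨Finset.mem_univ x, hx.2⟩
    have s1 : ∑ x ∈ Bi, P x Sstar ≤ ∑ x ∈ Bi, P x Bi :=
      Finset.sum_le_sum fun x hx => h_reg Bi Sstar hsub1 x hx
    have s2 : ∑ x ∈ Bi, P x Bi ≤ ∑ x ∈ T, P x T := by linarith [h_reg0 Bi T hsub2]
    have s3 : rv i * (∑ x ∈ T, P x T) ≤ ∑ x ∈ T, P x T * r x := by
      rw [Finset.mul_sum]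
      apply Finset.sum_le_sum
      intro x hx
      rw [hTdef, Finset.mem_filter] at hx
      calc rv i * P x T ≤ r x * P x T := mul_le_mul_of_nonneg_right hx.2 (h_nonneg x T)
        _ = P x T * r x := mul_comm _ _
    have hrvi := (hrvpos i h1 hik).le
    calc rv i * N i = rv i * ∑ x ∈ Bi, P x Sstar := by rw [hNi]
      _ ≤ rv i * ∑ x ∈ T, P x T := mul_le_mul_of_nonneg_left (le_trans s1 s2) hrvi
      _ ≤ ∑ x ∈ T, P x T * r x := s3
  -- fibers of the revenue function
  have hfiber : ∀ j, 1 ≤ j → j ≤ k →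
      ∑ x ∈ Sstar.filter (fun x => r x = rv j), P x Sstar = N j - N (j + 1) := by
    intro j h1 hjk
    rcases eq_or_lt_of_le hjk with hjk' | hjk'
    · -- j = k
      have hN1' : N (j + 1) = 0 := by rw [hN, if_neg (by omega)]
      have hset : Sstar.filter (fun x => r x = rv j) = Sstar.filter (fun x => rv j ≤ r x) := by
        ext x
        simp only [Finset.mem_filter]
        constructor
        · rintro ⟨hx, he⟩; exact ⟨hx, le_of_eq he.symm⟩
        · rintro ⟨hx, hle⟩
          obtain ⟨m, ⟨hm1, hmk⟩, hme⟩ := hrx x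
          refine ⟨hx, ?_⟩
          have hjm : rv j ≤ rv m := hme ▸ hle
          have hmj : j ≤ m := by
            by_contra h
            push_neg at h
            exact absurd hjm (not_le.mpr (hrvmono m j hm1 h hjk))
          have hmeq : m = j := by omega
          rw [← hme, hmeq]
      rw [hset, hN1', hN, if_pos hjk]
      ring
    · -- j < k
      have hsub : Sstar.filter (fun x => rv (j + 1) ≤ r x) ⊆
          Sstar.filter (fun x => rv j ≤ r x) := by
        intro x hx; rw [Finset.mem_filter] at hx ⊢
        exact ⟨hx.1, le_trans (hrvle j (j + 1) h1 (by omega) hjk') hx.2⟩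
      have hsd := Finset.sum_sdiff (f := fun x => P x Sstar) hsub
      have hset : Sstar.filter (fun x => rv j ≤ r x) \ Sstar.filter (fun x => rv (j + 1) ≤ r x)
          = Sstar.filter (fun x => r x = rv j) := by
        ext x
        simp only [Finset.mem_sdiff, Finset.mem_filter, not_and]
        constructor
        · rintro ⟨⟨hx, hle⟩, hnot⟩
          have hnle : ¬ rv (j + 1) ≤ r x := fun h => hnot hx h
          obtain ⟨m, ⟨hm1, hmk⟩, hme⟩ := hrx x
          have h1' : rv j ≤ rv m := hme ▸ hle
          have h2' : ¬ rv (j + 1) ≤ rv m := by rw [hme]; exact hnle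
          have hmge : j ≤ m := by
            by_contra h; push_neg at h
            exact absurd h1' (not_le.mpr (hrvmono m j hm1 h hjk))
          have hmlt : m < j + 1 := by
            by_contra h; push_neg at h
            exact h2' (hrvle (j + 1) m (by omega) h hmk)
          have hmeq : m = j := by omega
          exact ⟨hx, by rw [← hme, hmeq]⟩
        · rintro ⟨hx, he⟩
          refine ⟨⟨hx, le_of_eq he.symm⟩, fun _ hcon => ?_⟩
          rw [he] at hcon
          exact absurd hcon (not_le.mpr (hrvmono j (j + 1) h1 (by omega) hjk'))
      rw [hset] at hsd
      rw [hN j, hN (j + 1), if_pos hjk, if_pos (show j + 1 ≤ k by omega)]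
      linarith
  -- layer-cake: OPT as a sum over revenue values
  have hOPT1 : ∑ x ∈ Sstar, P x Sstar * r x
      = ∑ j ∈ Finset.Icc 1 k, rv j * (N j - N (j + 1)) := by
    choose g hg hgeq using hrx
    have hmaps : ∀ x ∈ Sstar, g x ∈ Finset.Icc 1 k := fun x _ => Finset.mem_Icc.mpr (hg x)
    rw [← Finset.sum_fiberwise_of_maps_to hmaps (fun x => P x Sstar * r x)]
    apply Finset.sum_congr rfl
    intro j hj
    obtain ⟨hj1, hjk⟩ := Finset.mem_Icc.mp hj
    have hfeq : Sstar.filter (fun x => g x = j) = Sstar.filter (fun x => r x = rv j) := by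
      ext x
      simp only [Finset.mem_filter]
      constructor
      · rintro ⟨hx, hgx⟩; exact ⟨hx, by rw [← hgeq x, hgx]⟩
      · rintro ⟨hx, hrxj⟩
        exact ⟨hx, hinj (g x) j (hg x).1 (hg x).2 hj1 hjk (by rw [hgeq x, hrxj])⟩
    rw [hfeq, ← hfiber j hj1 hjk, Finset.mul_sum]
    apply Finset.sum_congr rfl
    intro x hx
    rw [Finset.mem_filter] at hx
    rw [hx.2]; ring
  have hOPT2 : ∑ x ∈ Sstar, P x Sstar * r x
      = ∑ j ∈ Finset.Icc 1 ℓ, rv j * (N j - N (j + 1)) := by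
    rw [hOPT1]
    symm
    apply Finset.sum_subset
    · intro x hx; rw [Finset.mem_Icc] at hx ⊢; omega
    · intro j hj hnot
      rw [Finset.mem_Icc] at hj
      simp only [Finset.mem_Icc, not_and, not_le] at hnot
      have hℓj : ℓ < j := hnot hj.1
      rw [hNzero j hℓj, hNzero (j + 1) (by omega)]
      ring
  -- pick a maximizing revenue-ordered assortment
  have hne : (Finset.Icc 1 ℓ).Nonempty := ⟨1, Finset.mem_Icc.mpr ⟨le_refl 1, hℓ1⟩⟩
  obtain ⟨i, himem, himax⟩ := Finset.exists_max_image (Finset.Icc 1 ℓ)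
    (fun i => ∑ x ∈ Finset.univ.filter (fun x => rv i ≤ r x),
      P x (Finset.univ.filter (fun x => rv i ≤ r x)) * r x) hne
  obtain ⟨hi1, hiℓ⟩ := Finset.mem_Icc.mp himem
  have hik : i ≤ k := le_trans hiℓ hℓk
  have hRinonneg : 0 ≤ ∑ x ∈ Finset.univ.filter (fun x => rv i ≤ r x),
      P x (Finset.univ.filter (fun x => rv i ≤ r x)) * r x :=
    le_trans (mul_nonneg (hrvpos i hi1 hik).le (hNnonneg i)) (claimA i hi1 hik)
  have hmain : ∑ x ∈ Sstar, P x Sstar * r x ≤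
      (∑ j ∈ Finset.Icc 1 ℓ, (N j - N (j + 1)) / N j) *
        ∑ x ∈ Finset.univ.filter (fun x => rv i ≤ r x),
          P x (Finset.univ.filter (fun x => rv i ≤ r x)) * r x := by
    rw [hOPT2, Finset.sum_mul]
    apply Finset.sum_le_sum
    intro j hj
    obtain ⟨hj1, hjℓ⟩ := Finset.mem_Icc.mp hj
    have hjk : j ≤ k := le_trans hjℓ hℓk
    have hNj := hNpos j hj1 hjℓ
    have hc : 0 ≤ (N j - N (j + 1)) / N j :=
      div_nonneg (by linarith [hNmono j (j + 1) hj1 (by omega)]) hNj.le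
    have h1 : rv j * (N j - N (j + 1)) = ((N j - N (j + 1)) / N j) * (rv j * N j) := by
      field_simp
    rw [h1]
    exact mul_le_mul_of_nonneg_left (le_trans (claimA j hj1 hjk) (himax j hj)) hc
  -- bound the sum of ratios by the log expression
  have hDle : (∑ j ∈ Finset.Icc 1 ℓ, (N j - N (j + 1)) / N j)
      ≤ 1 + Real.log (N 1 / N ℓ) := by
    have hIcc : Finset.Icc 1 ℓ = Finset.Ico 1 (ℓ + 1) := by rw [Finset.Ico_add_one_right_eq_Icc]
    rw [hIcc, Finset.sum_Ico_succ_top hℓ1]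
    have hlast : (N ℓ - N (ℓ + 1)) / N ℓ = 1 := by
      rw [hNzero (ℓ + 1) (by omega), sub_zero]
      field_simp
    rw [hlast]
    have hstep : ∑ j ∈ Finset.Ico 1 ℓ, (N j - N (j + 1)) / N j
        ≤ ∑ j ∈ Finset.Ico 1 ℓ, (Real.log (N j) - Real.log (N (j + 1))) := by
      apply Finset.sum_le_sum
      intro j hj
      rw [Finset.mem_Ico] at hj
      have hNj := hNpos j hj.1 (by omega)
      have hNj1 := hNpos (j + 1) (by omega) (by omega)
      have hlog := Real.log_le_sub_one_of_pos (div_pos hNj1 hNj)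
      rw [Real.log_div hNj1.ne' hNj.ne'] at hlog
      have hq : (N j - N (j + 1)) / N j = 1 - N (j + 1) / N j := by field_simp
      rw [hq]
      linarith
    have key : ∀ n : ℕ, ∑ x ∈ Finset.range n,
        (Real.log (N (1 + x)) - Real.log (N (1 + x + 1)))
        = Real.log (N 1) - Real.log (N (1 + n)) := by
      intro n
      induction n with
      | zero => simp
      | succ m ih =>
        rw [Finset.sum_range_succ, ih]
        have he : (1 : ℕ) + (m + 1) = 1 + m + 1 := by omega
        rw [he]
        ring
    have htel : ∑ j ∈ Finset.Ico 1 ℓ, (Real.log (N j) - Real.log (N (j + 1)))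
        = Real.log (N 1) - Real.log (N ℓ) := by
      rw [Finset.sum_Ico_eq_sum_range, key (ℓ - 1),
        show (1 : ℕ) + (ℓ - 1) = ℓ by omega]
    rw [Real.log_div hN1.ne' hNℓ.ne']
    rw [htel] at hstep
    linarith
  refine ⟨i, Finset.mem_Icc.mpr ⟨hi1, hik⟩, hmain, ?_⟩
  exact le_trans hmain (mul_le_mul_of_nonneg_right hDle hRinonneg)
end

section
/- Under a regular discrete choice model, for every i ∈ [k] and every optimal assortment S*, the quantity N_i·r_i, where N_i = ∑_{x ∈ S*, r(x) ≥ r_i} P(x,S*), is at most the revenue of the best revenue-ordered assortment: N_i r_i ≤ max_j ∑_{x∈S_j} P(x,S_j) r(x). -/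
open Finset

open scoped Classical in
/-- Under a regular discrete choice model with optimal assortment `S*`, for every
revenue level `rv i`, the quantity `Nᵢ · rvᵢ`, where `Nᵢ` is the probability mass
that `S*` puts on products of revenue at least `rv i`, is at most the revenue of
the best revenue-ordered assortment. -/
theorem stmt6 {α : Type*} [Fintype α] [DecidableEq α]
    (P : α → Finset α → ℝ) (r : α → ℝ)
    (hr : ∀ x, 0 < r x)
    (h_nonneg : ∀ (x : α) (S : Finset α), 0 ≤ P x S)
    (h_vanish : ∀ (x : α) (S : Finset α), x ∉ S → P x S = 0)
    (h_sum : ∀ S : Finset α, ∑ x ∈ S, P x S ≤ 1)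
    (h_reg : ∀ S S' : Finset α, S ⊆ S' → ∀ x ∈ S, P x S' ≤ P x S)
    (h_reg0 : ∀ S S' : Finset α, S ⊆ S' →
      1 - ∑ x ∈ S', P x S' ≤ 1 - ∑ x ∈ S, P x S)
    (k : ℕ) (hk : 1 ≤ k) (rv : ℕ → ℝ)
    (hrvmono : ∀ i j, 1 ≤ i → i < j → j ≤ k → rv i < rv j)
    (hvals : Finset.univ.image r = (Finset.Icc 1 k).image rv)
    (Sstar : Finset α)
    (hopt : ∀ S : Finset α, ∑ x ∈ S, P x S * r x ≤ ∑ x ∈ Sstar, P x Sstar * r x) :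
    ∀ i ∈ Finset.Icc 1 k, ∃ j ∈ Finset.Icc 1 k,
      (∑ x ∈ Sstar.filter (fun x => rv i ≤ r x), P x Sstar) * rv i ≤
        ∑ x ∈ Finset.univ.filter (fun x => rv j ≤ r x),
          P x (Finset.univ.filter (fun x => rv j ≤ r x)) * r x := by
  intro i hi
  refine ⟨i, hi, ?_⟩
  set T := Sstar.filter (fun x => rv i ≤ r x) with hT
  set Si := Finset.univ.filter (fun x => rv i ≤ r x) with hSi
  have hTSi : T ⊆ Si := by
    intro x hx
    simp only [hT, hSi, mem_filter] at *
    exact ⟨mem_univ x, hx.2⟩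
  -- rv i is nonneg: it is a value of r
  have hrvpos : 0 ≤ rv i := by
    have : rv i ∈ (Finset.Icc 1 k).image rv := mem_image_of_mem rv hi
    rw [← hvals] at this
    obtain ⟨x, _, hx⟩ := mem_image.mp this
    rw [← hx]; exact (hr x).le
  have step1 : ∑ x ∈ T, P x Sstar ≤ ∑ x ∈ T, P x T := by
    refine sum_le_sum fun x hx => ?_
    exact h_reg T Sstar (filter_subset _ _) x hx
  have step2 : ∑ x ∈ T, P x T ≤ ∑ x ∈ Si, P x Si := by
    have := h_reg0 T Si hTSi
    linarith
  have step3 : (∑ x ∈ Si, P x Si) * rv i ≤ ∑ x ∈ Si, P x Si * r x := by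
    rw [sum_mul]
    refine sum_le_sum fun x hx => ?_
    have hxr : rv i ≤ r x := (mem_filter.mp hx).2
    exact mul_le_mul_of_nonneg_left hxr (h_nonneg x Si)
  calc (∑ x ∈ T, P x Sstar) * rv i ≤ (∑ x ∈ Si, P x Si) * rv i := by
        exact mul_le_mul_of_nonneg_right (step1.trans step2) hrvpos
    _ ≤ ∑ x ∈ Si, P x Si * r x := step3
end

section
/- For every integer k ≥ 1 and every ε with 0 < ε ≤ 1/2, the following defines a regular discrete choice model: the product set is C = {(i,j) : i ∈ [k], j ∈ [i]}, and for S ⊆ C and (i,j) ∈ S, P((i,j),S) = ε^i if no (i,j') with j' < j belongs to S, and 0 otherwise; i.e., P satisfies nonnegativity, P(x,S)=0 for x ∉ S, ∑_{x∈S}P(x,S) ≤ 1, and the regularity axiom P(x,S) ≥ P(x,S') for all S ⊆ S' and x ∈ S ∪ {0}, where P(0,S) = 1 − ∑_{x∈S}P(x,S). -/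
open Finset

private lemma stmt7_key (ε : ℝ) (P : ℕ × ℕ → Finset (ℕ × ℕ) → ℝ)
    (hP : ∀ (p : ℕ × ℕ) (S : Finset (ℕ × ℕ)),
      P p S = if p ∈ S ∧ ∀ q ∈ S, q.1 = p.1 → p.2 ≤ q.2 then ε ^ p.1 else 0)
    (S : Finset (ℕ × ℕ)) :
    ∑ p ∈ S, P p S = ∑ i ∈ S.image Prod.fst, ε ^ i := by
  rw [← Finset.sum_fiberwise_of_maps_to (g := Prod.fst)
      (fun p hp => Finset.mem_image_of_mem Prod.fst hp) (fun p => P p S)]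
  refine Finset.sum_congr rfl fun i hi => ?_
  obtain ⟨p₀, hp₀, hp₀i⟩ := Finset.mem_image.mp hi
  have hne : (S.filter (fun p => p.1 = i)).Nonempty :=
    ⟨p₀, Finset.mem_filter.mpr ⟨hp₀, hp₀i⟩⟩
  obtain ⟨m, hm, hmin⟩ := Finset.exists_min_image _ Prod.snd hne
  obtain ⟨hmS, hmi⟩ := Finset.mem_filter.mp hm
  rw [Finset.sum_eq_single m]
  · rw [hP, if_pos, hmi]
    exact ⟨hmS, fun q hq hqi => hmin q (Finset.mem_filter.mpr ⟨hq, hqi.trans hmi⟩)⟩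
  · intro p hp hpm
    obtain ⟨hpS, hpi⟩ := Finset.mem_filter.mp hp
    rw [hP, if_neg]
    rintro ⟨-, hcond⟩
    have h1 : p.2 ≤ m.2 := hcond m hmS (hmi.trans hpi.symm)
    have h2 : m.2 ≤ p.2 := hmin p hp
    exact hpm (Prod.ext (hpi.trans hmi.symm) (le_antisymm h1 h2))
  · intro h; exact absurd hm h

private lemma stmt7_geom (k : ℕ) (ε : ℝ) (hε0 : 0 < ε) (hε : ε ≤ 1 / 2) :
    ∑ i ∈ Finset.Icc 1 k, ε ^ i ≤ 1 := by
  have h1 : ∑ i ∈ Finset.Icc 1 k, ε ^ i ≤ ∑ i ∈ Finset.Icc 1 k, (1/2 : ℝ) ^ i :=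
    Finset.sum_le_sum fun i _ => pow_le_pow_left₀ hε0.le hε i
  have h2 : ∀ n, ∑ i ∈ Finset.Icc 1 n, (1/2 : ℝ) ^ i = 1 - (1/2) ^ n := by
    intro n
    induction n with
    | zero => simp
    | succ n ih =>
      rw [Finset.sum_Icc_succ_top (by omega), ih]
      ring
  rw [h2] at h1
  nlinarith [pow_pos (by norm_num : (0:ℝ) < 1/2) k]

/-- The tight-example construction: products are pairs `(i,j)` with `1 ≤ j ≤ i ≤ k`,
and `P((i,j),S) = ε^i` if `(i,j) ∈ S` and no `(i,j')` with `j' < j` lies in `S`,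
and `0` otherwise. This `P` is a regular discrete choice model: it is nonnegative,
vanishes outside the offered set, sums to at most `1`, and satisfies the regularity
axiom for both products and the no-purchase option. -/
theorem stmt7 (k : ℕ) (hk : 1 ≤ k) (ε : ℝ) (hε0 : 0 < ε) (hε : ε ≤ 1 / 2)
    (P : ℕ × ℕ → Finset (ℕ × ℕ) → ℝ)
    (hP : ∀ (p : ℕ × ℕ) (S : Finset (ℕ × ℕ)),
      P p S = if p ∈ S ∧ ∀ q ∈ S, q.1 = p.1 → p.2 ≤ q.2 then ε ^ p.1 else 0) :
    (∀ (p : ℕ × ℕ) (S : Finset (ℕ × ℕ)), 0 ≤ P p S) ∧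
    (∀ (p : ℕ × ℕ) (S : Finset (ℕ × ℕ)), p ∉ S → P p S = 0) ∧
    (∀ S ⊆ (Finset.Icc 1 k ×ˢ Finset.Icc 1 k).filter (fun p => p.2 ≤ p.1),
      ∑ p ∈ S, P p S ≤ 1) ∧
    (∀ S S' : Finset (ℕ × ℕ), S ⊆ S' →
      S' ⊆ (Finset.Icc 1 k ×ˢ Finset.Icc 1 k).filter (fun p => p.2 ≤ p.1) →
      ∀ p ∈ S, P p S' ≤ P p S) ∧
    (∀ S S' : Finset (ℕ × ℕ), S ⊆ S' →
      S' ⊆ (Finset.Icc 1 k ×ˢ Finset.Icc 1 k).filter (fun p => p.2 ≤ p.1) →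
      1 - ∑ p ∈ S', P p S' ≤ 1 - ∑ p ∈ S, P p S) := by
  have hnonneg : ∀ (p : ℕ × ℕ) (S : Finset (ℕ × ℕ)), 0 ≤ P p S := by
    intro p S
    rw [hP]
    split
    · positivity
    · exact le_refl 0
  refine ⟨hnonneg, ?_, ?_, ?_, ?_⟩
  · intro p S hpS
    rw [hP, if_neg (fun h => hpS h.1)]
  · intro S hS
    rw [stmt7_key ε P hP S]
    refine le_trans (Finset.sum_le_sum_of_subset_of_nonneg ?_
      (fun i _ _ => (pow_pos hε0 i).le)) (stmt7_geom k ε hε0 hε)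
    intro i hi
    obtain ⟨p, hp, rfl⟩ := Finset.mem_image.mp hi
    exact (Finset.mem_product.mp (Finset.mem_filter.mp (hS hp)).1).1
  · intro S S' hSS' _ p hpS
    rw [hP, hP]
    by_cases h : p ∈ S' ∧ ∀ q ∈ S', q.1 = p.1 → p.2 ≤ q.2
    · rw [if_pos h, if_pos ⟨hpS, fun q hq => h.2 q (hSS' hq)⟩]
    · rw [if_neg h]
      split
      · exact (pow_pos hε0 p.1).le
      · exact le_refl 0
  · intro S S' hSS' _
    have : (∑ p ∈ S, P p S) ≤ ∑ p ∈ S', P p S' := by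
      rw [stmt7_key ε P hP S, stmt7_key ε P hP S']
      exact Finset.sum_le_sum_of_subset_of_nonneg
        (Finset.image_subset_image hSS') (fun i _ _ => (pow_pos hε0 i).le)
    linarith
end

section
/- In the tight instance with products C = {(i,j) : i ∈ [k], j ∈ [i]}, revenues r((i,j)) = ε^{−j}, and choice probabilities P((i,j),S) = ε^i if no (i,j') ∈ S with j' < j and 0 otherwise (0 < ε ≤ 1/2): every revenue-ordered assortment has revenue strictly less than 1/(1−ε), while the assortment {(i,i) : i ∈ [k]} has revenue exactly k. -/
open Finset

/-- In the tight instance (products `(i,j)` with `1 ≤ j ≤ i ≤ k`, revenue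
`ε^{-j}` for product `(i,j)`, and `P((i,j),S) = ε^i` iff no `(i,j')` with
`j' < j` is in `S`): every revenue-ordered assortment
`S_j = {(i,j') : j' ≥ j}` has revenue strictly less than `1/(1-ε)`, while the
assortment `{(i,i) : i ∈ [k]}` has revenue exactly `k`. -/
theorem stmt8 (k : ℕ) (hk : 1 ≤ k) (ε : ℝ) (hε0 : 0 < ε) (hε : ε ≤ 1 / 2)
    (P : ℕ × ℕ → Finset (ℕ × ℕ) → ℝ)
    (hP : ∀ (p : ℕ × ℕ) (S : Finset (ℕ × ℕ)),
      P p S = if p ∈ S ∧ ∀ q ∈ S, q.1 = p.1 → p.2 ≤ q.2 then ε ^ p.1 else 0) :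
    (∀ j ∈ Finset.Icc 1 k,
      ∑ p ∈ ((Finset.Icc 1 k ×ˢ Finset.Icc 1 k).filter
          (fun p => p.2 ≤ p.1 ∧ j ≤ p.2)),
        P p ((Finset.Icc 1 k ×ˢ Finset.Icc 1 k).filter
          (fun p => p.2 ≤ p.1 ∧ j ≤ p.2)) * (ε ^ p.2)⁻¹
        < 1 / (1 - ε)) ∧
    (∑ p ∈ ((Finset.Icc 1 k ×ˢ Finset.Icc 1 k).filter (fun p => p.2 = p.1)),
        P p ((Finset.Icc 1 k ×ˢ Finset.Icc 1 k).filter (fun p => p.2 = p.1))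
          * (ε ^ p.2)⁻¹
        = (k : ℝ)) := by
  have hε1 : ε < 1 := lt_of_le_of_lt hε (by norm_num)
  have hεne : ε ≠ 0 := ne_of_gt hε0
  have hεpowne : ∀ n : ℕ, ε ^ n ≠ 0 := fun n => pow_ne_zero n hεne
  constructor
  · intro j hj
    simp only [Finset.mem_Icc] at hj
    set S := (Finset.Icc 1 k ×ˢ Finset.Icc 1 k).filter
        (fun p => p.2 ≤ p.1 ∧ j ≤ p.2) with hS
    have hmem : ∀ p : ℕ × ℕ, p ∈ S ↔
        (1 ≤ p.1 ∧ p.1 ≤ k) ∧ (1 ≤ p.2 ∧ p.2 ≤ k) ∧ p.2 ≤ p.1 ∧ j ≤ p.2 := by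
      intro p
      simp only [hS, Finset.mem_filter, Finset.mem_product, Finset.mem_Icc]
      tauto
    set T := (Finset.Icc j k).image (fun i => (i, j)) with hT
    have hTmem : ∀ p : ℕ × ℕ, p ∈ T ↔ p.2 = j ∧ j ≤ p.1 ∧ p.1 ≤ k := by
      intro p
      simp only [hT, Finset.mem_image, Finset.mem_Icc]
      constructor
      · rintro ⟨i, ⟨h1, h2⟩, rfl⟩; exact ⟨rfl, h1, h2⟩
      · rintro ⟨h1, h2, h3⟩; exact ⟨p.1, ⟨h2, h3⟩, by
          rw [← h1]⟩
    have hsub : T ⊆ S := by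
      intro p hp
      rw [hTmem] at hp
      rw [hmem]
      exact ⟨⟨le_trans hj.1 hp.2.1, hp.2.2⟩, ⟨by omega, by omega⟩, by omega, by omega⟩
    have key : ∑ p ∈ S, P p S * (ε ^ p.2)⁻¹ = ∑ p ∈ T, P p S * (ε ^ p.2)⁻¹ := by
      refine (Finset.sum_subset hsub ?_).symm
      intro p hpS hpT
      rw [hmem] at hpS
      rw [hTmem] at hpT
      have hp2 : j < p.2 := by omega
      have hq : (p.1, j) ∈ S := by
        rw [hmem]; exact ⟨⟨hpS.1.1, hpS.1.2⟩, ⟨by omega, by omega⟩, by omega, le_rfl⟩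
      rw [hP]
      rw [if_neg, zero_mul]
      rintro ⟨-, hmin⟩
      have := hmin (p.1, j) hq rfl
      omega
    rw [key]
    have hterm : ∀ p ∈ T, P p S * (ε ^ p.2)⁻¹ = ε ^ p.1 * (ε ^ j)⁻¹ := by
      intro p hp
      have hpT := (hTmem p).1 hp
      rw [hP, if_pos, hpT.1]
      refine ⟨hsub hp, ?_⟩
      intro q hq hq1
      rw [hmem] at hq
      omega
    rw [Finset.sum_congr rfl hterm]
    have himg : ∑ p ∈ T, ε ^ p.1 * (ε ^ j)⁻¹ = ∑ i ∈ Finset.Icc j k, ε ^ i * (ε ^ j)⁻¹ := by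
      rw [hT, Finset.sum_image]
      intro a _ b _ h
      exact congrArg Prod.fst h
    rw [himg]
    have hre : ∑ i ∈ Finset.Icc j k, ε ^ i * (ε ^ j)⁻¹
        = ∑ t ∈ Finset.range (k + 1 - j), ε ^ t := by
      rw [← Finset.Ico_add_one_right_eq_Icc, Finset.sum_Ico_eq_sum_range]
      refine Finset.sum_congr rfl ?_
      intro t _
      rw [pow_add]
      field_simp
    rw [hre]
    have hgeom : ∑ t ∈ Finset.range (k + 1 - j), ε ^ t = (1 - ε ^ (k + 1 - j)) / (1 - ε) := by
      rw [geom_sum_eq (ne_of_lt hε1)]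
      rw [div_eq_div_iff (by linarith) (by linarith)]
      ring
    rw [hgeom]
    rw [div_lt_div_iff₀ (by linarith) (by linarith)]
    nlinarith [pow_pos hε0 (k + 1 - j)]
  · set S := (Finset.Icc 1 k ×ˢ Finset.Icc 1 k).filter (fun p => p.2 = p.1) with hS
    have hmem : ∀ p : ℕ × ℕ, p ∈ S ↔ 1 ≤ p.1 ∧ p.1 ≤ k ∧ p.2 = p.1 := by
      intro p
      simp only [hS, Finset.mem_filter, Finset.mem_product, Finset.mem_Icc]
      constructor
      · rintro ⟨⟨h1, h2⟩, h3⟩; exact ⟨h1.1, h1.2, h3⟩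
      · rintro ⟨h1, h2, h3⟩; exact ⟨⟨⟨h1, h2⟩, by omega, by omega⟩, h3⟩
    have hSeq : S = (Finset.Icc 1 k).image (fun i => (i, i)) := by
      ext ⟨a, b⟩
      rw [hmem]
      simp only [Finset.mem_image, Finset.mem_Icc, Prod.mk.injEq]
      constructor
      · rintro ⟨h1, h2, h3⟩; exact ⟨a, ⟨h1, h2⟩, rfl, h3.symm⟩
      · rintro ⟨i, hi, rfl, rfl⟩; exact ⟨hi.1, hi.2, rfl⟩
    have hterm : ∀ p ∈ S, P p S * (ε ^ p.2)⁻¹ = 1 := by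
      intro p hp
      have hp' := (hmem p).1 hp
      rw [hP, if_pos, hp'.2.2, mul_inv_cancel₀ (hεpowne _)]
      refine ⟨hp, ?_⟩
      intro q hq hq1
      have := (hmem q).1 hq
      omega
    rw [Finset.sum_congr rfl hterm, Finset.sum_const, hSeq, Finset.card_image_of_injective]
    · simp
    · intro a b h
      exact congrArg Prod.fst h
end

section
/- In any RUM, the demand function f(S) = ∑_{x∈S} P(x,S) is submodular: f(S' ∪ {x}) − f(S') ≤ f(S ∪ {x}) − f(S) for every S ⊆ S' ⊆ C and x ∈ C, where P(y,S) = Pr(U_y = max{U_z : z ∈ S ∪ {0}}). -/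
open Finset MeasureTheory

/-- In any random utility model (utilities `U0` for no-purchase and `U x` for
products, a.s. pairwise distinct), the demand function
`f S = Pr(the maximum utility over S ∪ {0} is attained in S)` is submodular. -/
theorem stmt10 {Ω : Type*} [MeasurableSpace Ω] (μ : Measure Ω)
    [IsProbabilityMeasure μ] (N : ℕ)
    (U0 : Ω → ℝ) (U : Fin N → Ω → ℝ)
    (hm0 : Measurable U0) (hm : ∀ x, Measurable (U x))
    (hd : ∀ x y : Fin N, x ≠ y → μ {ω | U x ω = U y ω} = 0)
    (hd0 : ∀ x : Fin N, μ {ω | U x ω = U0 ω} = 0)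
    (f : Finset (Fin N) → ℝ)
    (hf : ∀ S : Finset (Fin N),
      f S = (μ {ω | ∃ x ∈ S, U0 ω ≤ U x ω ∧ ∀ y ∈ S, U y ω ≤ U x ω}).toReal) :
    ∀ S S' : Finset (Fin N), S ⊆ S' → ∀ x : Fin N,
      f (insert x S') - f S' ≤ f (insert x S) - f S := by
  intro S S' hSS x
  set E : Fin N → Set Ω := fun y => {ω | U0 ω ≤ U y ω} with hE
  have hEm : ∀ y, MeasurableSet (E y) := fun y => measurableSet_le hm0 (hm y)
  have hAm : ∀ T : Finset (Fin N), MeasurableSet (⋃ y ∈ T, E y) :=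
    fun T => MeasurableSet.biUnion T.countable_toSet (fun y _ => hEm y)
  -- the event in `hf` is just the union of the `E y`
  have key : ∀ T : Finset (Fin N),
      {ω | ∃ y ∈ T, U0 ω ≤ U y ω ∧ ∀ z ∈ T, U z ω ≤ U y ω} = ⋃ y ∈ T, E y := by
    intro T
    ext ω
    simp only [Set.mem_setOf_eq, Set.mem_iUnion, hE]
    constructor
    · rintro ⟨y, hy, h1, -⟩; exact ⟨y, hy, h1⟩
    · rintro ⟨y, hy, h1⟩
      obtain ⟨m, hmT, hmax⟩ := T.exists_max_image (fun z => U z ω) ⟨y, hy⟩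
      exact ⟨m, hmT, le_trans h1 (hmax y hy), hmax⟩
  have hf' : ∀ T : Finset (Fin N), f T = (μ (⋃ y ∈ T, E y)).toReal := by
    intro T; rw [hf T, key T]
  have hdiff : ∀ T : Finset (Fin N),
      f (insert x T) - f T = (μ (E x \ ⋃ y ∈ T, E y)).toReal := by
    intro T
    rw [hf' T, hf' (insert x T)]
    have hu : (⋃ y ∈ insert x T, E y) = (⋃ y ∈ T, E y) ∪ (E x \ ⋃ y ∈ T, E y) := by
      rw [Set.union_diff_self]
      rw [Finset.set_biUnion_insert]
      exact Set.union_comm _ _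
    rw [hu, measure_union (Set.disjoint_sdiff_right) ((hEm x).diff (hAm T)),
      ENNReal.toReal_add (measure_ne_top μ _) (measure_ne_top μ _)]
    ring
  rw [hdiff S, hdiff S']
  exact ENNReal.toReal_mono (measure_ne_top μ _)
    (measure_mono (Set.diff_subset_diff_right
      (Set.biUnion_subset_biUnion_left (Finset.coe_subset.mpr hSS))))
end

section
/- There exists a regular discrete choice model on three products that is not a RUM: specifically, the system of choice probabilities given by P(x,{x}) = 0.5 for each x ∈ {1,2,3}, P(x,S) = 0.3 for each x in each two-element set S, and P(x,{1,2,3}) = 0.25 for each x, satisfies axioms (i)–(iv) of regular discrete choice models but its demand function f(S) = ∑_{x∈S} P(x,S) is not submodular, since f({1,2,3}) − f({1,2}) = 0.15 > 0.1 = f({1,3}) − f({1}). -/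
open Finset

noncomputable def gP (S : Finset (Fin 3)) : ℝ :=
  if S.card = 1 then 1 / 2 else if S.card = 2 then 3 / 10 else 1 / 4

noncomputable def myP (x : Fin 3) (S : Finset (Fin 3)) : ℝ :=
  if x ∈ S then gP S else 0

lemma myP_sum (S : Finset (Fin 3)) : ∑ x ∈ S, myP x S = S.card * gP S := by
  have : ∑ x ∈ S, myP x S = ∑ _x ∈ S, gP S :=
    Finset.sum_congr rfl (fun x hx => by simp [myP, hx])
  rw [this, Finset.sum_const, nsmul_eq_mul]

lemma card_le3 (S : Finset (Fin 3)) : S.card ≤ 3 := by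
  simpa using Finset.card_le_card (Finset.subset_univ S)

/-- There is a regular discrete choice model on three products whose demand
function is not submodular (hence it is not a RUM): `P(x,S)` equals `1/2`,
`3/10`, `1/4` according to whether `|S| = 1, 2, 3` (and `0` if `x ∉ S`).
It satisfies all four axioms of regular discrete choice models, yet
`f({1,2,3}) − f({1,2}) = 0.15 > 0.1 = f({1,3}) − f({1})`. -/
theorem stmt11 :
    ∃ P : Fin 3 → Finset (Fin 3) → ℝ,
      (∀ (x : Fin 3) (S : Finset (Fin 3)),
        P x S = if x ∈ S then
          (if S.card = 1 then 1 / 2 else if S.card = 2 then 3 / 10 else 1 / 4)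
          else 0) ∧
      (∀ (x : Fin 3) (S : Finset (Fin 3)), 0 ≤ P x S) ∧
      (∀ (x : Fin 3) (S : Finset (Fin 3)), x ∉ S → P x S = 0) ∧
      (∀ S : Finset (Fin 3), ∑ x ∈ S, P x S ≤ 1) ∧
      (∀ S S' : Finset (Fin 3), S ⊆ S' → ∀ x ∈ S, P x S' ≤ P x S) ∧
      (∀ S S' : Finset (Fin 3), S ⊆ S' →
        1 - ∑ x ∈ S', P x S' ≤ 1 - ∑ x ∈ S, P x S) ∧
      (∑ x ∈ (Finset.univ : Finset (Fin 3)), P x Finset.univ)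
          - (∑ x ∈ ({0, 1} : Finset (Fin 3)), P x {0, 1}) = 15 / 100 ∧
      (∑ x ∈ ({0, 2} : Finset (Fin 3)), P x {0, 2})
          - (∑ x ∈ ({0} : Finset (Fin 3)), P x {0}) = 1 / 10 ∧
      (∑ x ∈ (Finset.univ : Finset (Fin 3)), P x Finset.univ)
          - (∑ x ∈ ({0, 1} : Finset (Fin 3)), P x {0, 1})
        > (∑ x ∈ ({0, 2} : Finset (Fin 3)), P x {0, 2})
          - (∑ x ∈ ({0} : Finset (Fin 3)), P x {0}) := by
  refine ⟨myP, fun x S => rfl, ?_, ?_, ?_, ?_, ?_, ?_, ?_, ?_⟩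
  · intro x S
    unfold myP gP
    split_ifs <;> norm_num
  · intro x S hx; simp [myP, hx]
  · intro S
    rw [myP_sum]
    have h3 := card_le3 S
    unfold gP
    interval_cases h : S.card <;> norm_num
  · intro S S' hss x hx
    have hx' : x ∈ S' := hss hx
    simp only [myP, hx, hx', if_true]
    have h1 : 1 ≤ S.card := Finset.card_pos.mpr ⟨x, hx⟩
    have h2 : S.card ≤ S'.card := Finset.card_le_card hss
    have h3 := card_le3 S'
    unfold gP
    interval_cases h' : S'.card <;> interval_cases h : S.card <;> norm_num
  · intro S S' hss
    have h2 : S.card ≤ S'.card := Finset.card_le_card hss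
    have h3 := card_le3 S'
    rw [myP_sum, myP_sum]
    unfold gP
    interval_cases h' : S'.card <;> interval_cases h : S.card <;> norm_num
  all_goals
    simp only [myP_sum, gP,
      show (({0, 1} : Finset (Fin 3)).card = 2) from by decide,
      show (({0, 2} : Finset (Fin 3)).card = 2) from by decide,
      show (({0} : Finset (Fin 3)).card = 1) from by decide,
      show ((Finset.univ : Finset (Fin 3)).card = 3) from by decide]
    norm_num
end

section
/- In the UDP_min problem there always exists an optimal price assignment whose prices all belong to the set of consumer valuations {v_1, ..., v_m}: for any price assignment p : [n] → ℝ_{>0} there is a price assignment p' with p'(x) ∈ {v_1,...,v_m} for all x whose revenue is at least that of p. -/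
open Finset

open scoped Classical in
/-- In the `UDP_min` problem (consumer `i` has acceptable set `B i` and valuation
`v i`, and buys a cheapest item of `B i` if its price is at most `v i`), for any
price assignment `p` there is a price assignment `p'` taking values in the set of
consumer valuations whose revenue is at least that of `p`. -/
theorem stmt12 (n m : ℕ) (hm : 0 < m)
    (B : Fin m → Finset (Fin n)) (v : Fin m → ℝ) (hv : ∀ i, 0 ≤ v i)
    (p : Fin n → ℝ) (hp : ∀ x, 0 < p x) :
    ∃ p' : Fin n → ℝ, (∀ x, p' x ∈ Set.range v) ∧
      (∑ i : Fin m, if ∃ x ∈ B i, p x ≤ v i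
          then sInf (p '' (B i : Set (Fin n))) else 0)
        ≤ ∑ i : Fin m, if ∃ x ∈ B i, p' x ≤ v i
          then sInf (p' '' (B i : Set (Fin n))) else 0 := by
  classical
  have hmn : (Finset.univ : Finset (Fin m)).Nonempty := ⟨⟨0, hm⟩, Finset.mem_univ _⟩
  set M : ℝ := Finset.univ.sup' hmn v with hM
  set p' : Fin n → ℝ := fun x =>
    if h : (Finset.univ.filter (fun j => p x ≤ v j)).Nonempty
    then (Finset.univ.filter (fun j => p x ≤ v j)).inf' h v
    else M with hp'
  refine ⟨p', ?_, ?_⟩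
  · intro x
    by_cases h : (Finset.univ.filter (fun j => p x ≤ v j)).Nonempty
    · obtain ⟨j, hj, hje⟩ := Finset.exists_mem_eq_inf' h v
      exact ⟨j, by simp [hp', h, hje.symm]⟩
    · obtain ⟨j, hj, hje⟩ := Finset.exists_mem_eq_sup' hmn v
      exact ⟨j, by simp [hp', h, hM, hje.symm]⟩
  · apply Finset.sum_le_sum
    intro i _
    have hrange_nonneg : ∀ y, 0 ≤ p' y := by
      intro y
      by_cases h : (Finset.univ.filter (fun j => p y ≤ v j)).Nonempty
      · simp only [hp', dif_pos h]
        obtain ⟨j, hj, hje⟩ := Finset.exists_mem_eq_inf' h v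
        rw [hje]; exact hv j
      · simp only [hp', dif_neg h]
        obtain ⟨j, hj, hje⟩ := Finset.exists_mem_eq_sup' hmn v
        rw [hM, hje]; exact hv j
    by_cases hc : ∃ x ∈ B i, p x ≤ v i
    · obtain ⟨x0, hx0B, hx0⟩ := hc
      have hcond : ∃ x ∈ B i, p' x ≤ v i := by
        refine ⟨x0, hx0B, ?_⟩
        have h : (Finset.univ.filter (fun j => p x0 ≤ v j)).Nonempty :=
          ⟨i, by simp [hx0]⟩
        simp only [hp', dif_pos h]
        exact Finset.inf'_le v (by simp [hx0])
      rw [if_pos ⟨x0, hx0B, hx0⟩, if_pos hcond]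
      have hBne : ((B i : Set (Fin n))).Nonempty := ⟨x0, hx0B⟩
      have hfin : (p '' (B i : Set (Fin n))).Finite := ((B i).finite_toSet.image p)
      have hIle : sInf (p '' (B i : Set (Fin n))) ≤ p x0 :=
        csInf_le hfin.bddBelow ⟨x0, hx0B, rfl⟩
      apply le_csInf (hBne.image p')
      rintro b ⟨y, hyB, rfl⟩
      by_cases h : (Finset.univ.filter (fun j => p y ≤ v j)).Nonempty
      · have hle : p y ≤ p' y := by
          simp only [hp', dif_pos h]
          apply Finset.le_inf'
          intro j hj
          exact (Finset.mem_filter.mp hj).2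
        calc sInf (p '' (B i : Set (Fin n))) ≤ p y :=
              csInf_le hfin.bddBelow ⟨y, hyB, rfl⟩
          _ ≤ p' y := hle
      · have hMy : p' y = M := by simp [hp', h]
        rw [hMy]
        calc sInf (p '' (B i : Set (Fin n))) ≤ p x0 := hIle
          _ ≤ v i := hx0
          _ ≤ M := Finset.le_sup' v (Finset.mem_univ i)
    · rw [if_neg hc]
      by_cases hc' : ∃ x ∈ B i, p' x ≤ v i
      · rw [if_pos hc']
        obtain ⟨x0, hx0B, _⟩ := hc'
        refine le_csInf ⟨p' x0, x0, hx0B, rfl⟩ ?_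
        rintro b ⟨y, hyB, rfl⟩
        exact hrange_nonneg y
      · rw [if_neg hc']
end

section
/- Let M = (E, X) be a matroid, L a linear ordering of E, and for F ⊆ E let greedy_M(F, L) be the independent set produced by the greedy algorithm on F using ordering L. Then for every F ⊆ F' ⊆ E: (i) |greedy_M(F', L)| ≥ |greedy_M(F, L)|, and (ii) F ∩ greedy_M(F', L) ⊆ greedy_M(F, L). -/
open Finset

/-- The greedy algorithm: process the elements of the given list in order, adding
an element whenever the current set stays independent. -/
def greedyList {α : Type*} [DecidableEq α] (Ind : Finset α → Prop)
    [DecidablePred Ind] : List α → Finset α → Finset α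
  | [], acc => acc
  | e :: rest, acc =>
      if Ind (insert e acc) then greedyList Ind rest (insert e acc)
      else greedyList Ind rest acc

section Aux

variable {α : Type*} [DecidableEq α] (Ind : Finset α → Prop) [DecidablePred Ind]

/-- Any independent set can be grown, using elements of an independent set `T`,
to an independent set at least as large as `T`. -/
lemma greedy_extend_aux
    (h_exch : ∀ X Y : Finset α, Ind X → Ind Y → X.card < Y.card →
      ∃ y ∈ Y \ X, Ind (insert y X)) :
    ∀ (n : ℕ) (A T : Finset α), Ind A → Ind T → T.card - A.card ≤ n →
      ∃ S, A ⊆ S ∧ S ⊆ A ∪ T ∧ Ind S ∧ T.card ≤ S.card := by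
  intro n
  induction n with
  | zero =>
    intro A T hA _ h
    exact ⟨A, Subset.rfl, subset_union_left, hA, by omega⟩
  | succ n ih =>
    intro A T hA hT h
    by_cases hc : T.card ≤ A.card
    · exact ⟨A, Subset.rfl, subset_union_left, hA, hc⟩
    · push_neg at hc
      obtain ⟨y, hy, hyi⟩ := h_exch A T hA hT hc
      rw [mem_sdiff] at hy
      obtain ⟨S, h1, h2, h3, h4⟩ := ih (insert y A) T hyi hT
        (by rw [card_insert_of_notMem hy.2]; omega)
      refine ⟨S, (subset_insert y A).trans h1, h2.trans ?_, h3, h4⟩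
      intro x hx
      rcases mem_union.mp hx with hx | hx
      · rcases mem_insert.mp hx with rfl | hx
        · exact mem_union_right _ hy.1
        · exact mem_union_left _ hx
      · exact mem_union_right _ hx

/-- Key matroid lemma: if `B` spans `A` and `e` can be added to `B`, then
`e` can be added to `A`. -/
lemma greedy_key
    (h_down : ∀ X Y : Finset α, Y ⊆ X → Ind X → Ind Y)
    (h_exch : ∀ X Y : Finset α, Ind X → Ind Y → X.card < Y.card →
      ∃ y ∈ Y \ X, Ind (insert y X))
    {A B : Finset α} {e : α} (hA : Ind A) (hB : Ind B) (heB : e ∉ B)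
    (he : Ind (insert e B))
    (hspan : ∀ a ∈ A, a ∈ B ∨ ¬ Ind (insert a B)) :
    Ind (insert e A) := by
  obtain ⟨S, hAS, hS, hIndS, hcard⟩ :=
    greedy_extend_aux Ind h_exch ((insert e B).card) A (insert e B) hA he (by omega)
  by_cases heS : e ∈ S
  · exact h_down S (insert e A) (insert_subset heS hAS) hIndS
  · have hSB : S ⊆ A ∪ B := by
      intro x hx
      rcases mem_union.mp (hS hx) with h | h
      · exact mem_union_left _ h
      · rcases mem_insert.mp h with rfl | h
        · exact absurd hx heS
        · exact mem_union_right _ h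
    have hlt : B.card < S.card := by
      rw [card_insert_of_notMem heB] at hcard; omega
    obtain ⟨y, hy, hyi⟩ := h_exch B S hB hIndS hlt
    rw [mem_sdiff] at hy
    have hyA : y ∈ A := by
      rcases mem_union.mp (hSB hy.1) with h | h
      · exact h
      · exact absurd h hy.2
    rcases hspan y hyA with h | h
    · exact absurd h hy.2
    · exact absurd hyi h

lemma greedy_main
    (h_down : ∀ X Y : Finset α, Y ⊆ X → Ind X → Ind Y)
    (h_exch : ∀ X Y : Finset α, Ind X → Ind Y → X.card < Y.card →
      ∃ y ∈ Y \ X, Ind (insert y X))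
    (F F' : Finset α) (hFF' : F ⊆ F') :
    ∀ (L : List α) (A A' : Finset α),
      L.Nodup →
      (∀ x ∈ L, x ∉ A ∧ x ∉ A') →
      Ind A → Ind A' →
      A' ∩ F ⊆ A →
      A.card ≤ A'.card →
      (∀ x ∈ A, x ∈ A' ∨ ¬ Ind (insert x A')) →
      (greedyList Ind (L.filter (fun x => x ∈ F)) A).card ≤
        (greedyList Ind (L.filter (fun x => x ∈ F')) A').card ∧
      (greedyList Ind (L.filter (fun x => x ∈ F')) A') ∩ F ⊆
        greedyList Ind (L.filter (fun x => x ∈ F)) A := by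
  intro L
  induction L with
  | nil =>
    intro A A' _ _ _ _ h3 h4 _
    simpa [greedyList] using ⟨h4, h3⟩
  | cons e rest ih =>
    intro A A' hnd hfresh hA hA' h3 h4 h5
    have hnd' : rest.Nodup := (List.nodup_cons.mp hnd).2
    have herest : e ∉ rest := (List.nodup_cons.mp hnd).1
    have heA : e ∉ A := (hfresh e (by simp)).1
    have heA' : e ∉ A' := (hfresh e (by simp)).2
    by_cases heF' : e ∈ F'
    · by_cases heF : e ∈ F
      · -- e is processed by both runs
        rw [List.filter_cons, List.filter_cons]
        simp only [heF, heF', decide_true, if_true]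
        by_cases hacc' : Ind (insert e A')
        · -- F' run accepts e; then the F run must also accept e
          have hacc : Ind (insert e A) :=
            greedy_key Ind h_down h_exch hA hA' heA' hacc' h5
          simp only [greedyList, hacc, hacc', if_true]
          refine ih (insert e A) (insert e A') hnd' ?_ hacc hacc' ?_ ?_ ?_
          · intro x hx
            have := hfresh x (by simp [hx])
            have hxe : x ≠ e := fun h => herest (h ▸ hx)
            simp [this.1, this.2, hxe]
          · intro x hx
            rw [mem_inter, mem_insert] at hx
            rcases hx.1 with rfl | hx1
            · exact mem_insert_self _ _
            · exact mem_insert_of_mem (h3 (mem_inter.mpr ⟨hx1, hx.2⟩))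
          · rw [card_insert_of_notMem heA, card_insert_of_notMem heA']; omega
          · intro x hx
            rcases mem_insert.mp hx with rfl | hx
            · exact Or.inl (mem_insert_self _ _)
            · rcases h5 x hx with h | h
              · exact Or.inl (mem_insert_of_mem h)
              · exact Or.inr fun hc => h (h_down _ _
                  (insert_subset_insert _ (subset_insert _ _)) hc)
        · -- F' run rejects e
          by_cases hacc : Ind (insert e A)
          · simp only [greedyList, hacc, hacc', if_true, if_false]
            refine ih (insert e A) A' hnd' ?_ hacc hA' (h3.trans (subset_insert _ _)) ?_ ?_
            · intro x hx
              have := hfresh x (by simp [hx])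
              have hxe : x ≠ e := fun h => herest (h ▸ hx)
              simp [this.1, this.2, hxe]
            · -- (insert e A).card ≤ A'.card
              by_contra hlt
              push_neg at hlt
              obtain ⟨y, hy, hyi⟩ := h_exch A' (insert e A) hA' hacc hlt
              rw [mem_sdiff] at hy
              rcases mem_insert.mp hy.1 with rfl | hyA
              · exact hacc' hyi
              · rcases h5 y hyA with h | h
                · exact hy.2 h
                · exact h hyi
            · intro x hx
              rcases mem_insert.mp hx with rfl | hx
              · exact Or.inr hacc'
              · exact h5 x hx
          · simp only [greedyList, hacc, hacc', if_false]
            refine ih A A' hnd' ?_ hA hA' h3 h4 h5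
            intro x hx; exact hfresh x (by simp [hx])
      · -- e ∈ F' \ F : only the F' run processes e
        rw [List.filter_cons, List.filter_cons]
        simp only [heF, heF', decide_true, decide_false, if_true, if_false]
        by_cases hacc' : Ind (insert e A')
        · simp only [greedyList, hacc', if_true]
          refine ih A (insert e A') hnd' ?_ hA hacc' ?_ ?_ ?_
          · intro x hx
            have := hfresh x (by simp [hx])
            have hxe : x ≠ e := fun h => herest (h ▸ hx)
            simp [this.1, this.2, hxe]
          · intro x hx
            rw [mem_inter, mem_insert] at hx
            rcases hx.1 with rfl | hx1
            · exact absurd hx.2 heF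
            · exact h3 (mem_inter.mpr ⟨hx1, hx.2⟩)
          · rw [card_insert_of_notMem heA']; omega
          · intro x hx
            rcases h5 x hx with h | h
            · exact Or.inl (mem_insert_of_mem h)
            · exact Or.inr fun hc => h (h_down _ _
                (insert_subset_insert _ (subset_insert _ _)) hc)
        · simp only [greedyList, hacc', if_false]
          refine ih A A' hnd' ?_ hA hA' h3 h4 h5
          intro x hx; exact hfresh x (by simp [hx])
    · -- e is in neither F nor F'
      have heF : e ∉ F := fun h => heF' (hFF' h)
      rw [List.filter_cons, List.filter_cons]
      simp only [heF, heF', decide_false, if_false]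
      refine ih A A' hnd' ?_ hA hA' h3 h4 h5
      intro x hx; exact hfresh x (by simp [hx])

end Aux

/-- For a matroid with independence predicate `Ind` and a linear ordering of the
ground set given by a duplicate-free list `L`, running greedy on `F ⊆ F'`
(elements taken in the order of `L`) gives: (i) the greedy set of `F'` is at
least as large as that of `F`, and (ii) every element of `F` selected by greedy
on `F'` is also selected by greedy on `F`. -/
theorem stmt13 {α : Type*} [DecidableEq α] (Ind : Finset α → Prop)
    [DecidablePred Ind]
    (h_empty : Ind ∅)
    (h_down : ∀ X Y : Finset α, Y ⊆ X → Ind X → Ind Y)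
    (h_exch : ∀ X Y : Finset α, Ind X → Ind Y → X.card < Y.card →
      ∃ y ∈ Y \ X, Ind (insert y X))
    (L : List α) (hnodup : L.Nodup)
    (F F' : Finset α) (hFF' : F ⊆ F') (hF'L : ∀ x ∈ F', x ∈ L) :
    (greedyList Ind (L.filter (fun x => x ∈ F)) ∅).card ≤
      (greedyList Ind (L.filter (fun x => x ∈ F')) ∅).card ∧
    F ∩ greedyList Ind (L.filter (fun x => x ∈ F')) ∅ ⊆
      greedyList Ind (L.filter (fun x => x ∈ F)) ∅ := by
  obtain ⟨h1, h2⟩ := greedy_main Ind h_down h_exch F F' hFF' L ∅ ∅ hnodup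
    (by simp) h_empty h_empty (by simp) le_rfl (by simp)
  exact ⟨h1, by rwa [inter_comm]⟩
end

section
/- Let M = (E, X) be a matroid whose ground set is partitioned into blocks E_1, ..., E_ℓ, and let L, L' be two linear orderings of E that agree on the block partition (every element of E_i precedes every element of E_{i+1} under both orderings). Then for every i, |greedy_M(E, L) ∩ E_i| = |greedy_M(E, L') ∩ E_i|. -/
open Finset

section Aux
variable {α : Type*} [DecidableEq α] (Ind : Finset α → Prop) [DecidablePred Ind]

lemma subset_greedy : ∀ (l : List α) (acc : Finset α), acc ⊆ greedyList Ind l acc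
  | [], acc => by simp [greedyList]
  | e :: rest, acc => by
    rw [greedyList]
    split
    · exact (Finset.subset_insert e acc).trans (subset_greedy rest (insert e acc))
    · exact subset_greedy rest acc

lemma greedy_subset : ∀ (l : List α) (acc : Finset α),
    greedyList Ind l acc ⊆ acc ∪ l.toFinset
  | [], acc => by simp [greedyList]
  | e :: rest, acc => by
    rw [greedyList]
    split
    · refine (greedy_subset rest _).trans ?_
      intro x hx; simp at hx ⊢; tauto
    · refine (greedy_subset rest acc).trans ?_
      intro x hx; simp at hx ⊢; tauto

lemma greedy_ind : ∀ (l : List α) (acc : Finset α), Ind acc →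
    Ind (greedyList Ind l acc)
  | [], acc => by simp [greedyList]
  | e :: rest, acc => by
    intro hacc
    rw [greedyList]
    split
    · exact greedy_ind rest _ ‹_›
    · exact greedy_ind rest acc hacc

lemma greedy_max (blk : α → ℕ) :
    ∀ (l : List α) (acc : Finset α), l.Pairwise (fun x y => blk x ≤ blk y) →
      ∀ e ∈ l, e ∉ greedyList Ind l acc →
      ∃ S, S ⊆ greedyList Ind l acc ∧ (∀ x ∈ S, x ∈ acc ∨ blk x ≤ blk e) ∧
        ¬ Ind (insert e S)
  | [], acc => by simp
  | a :: rest, acc => by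
    intro hsort e he hne
    have hsrest : rest.Pairwise (fun x y => blk x ≤ blk y) := hsort.of_cons
    by_cases h : Ind (insert a acc)
    · rw [greedyList, if_pos h] at hne ⊢
      rcases List.mem_cons.mp he with rfl | he'
      · exact absurd (subset_greedy Ind rest _ (Finset.mem_insert_self e acc)) hne
      · obtain ⟨S, hS1, hS2, hS3⟩ :=
          greedy_max blk rest (insert a acc) hsrest e he' hne
        refine ⟨S, hS1, fun x hx => ?_, hS3⟩
        rcases hS2 x hx with hx' | hx'
        · rcases Finset.mem_insert.mp hx' with rfl | h2
          · exact Or.inr ((List.pairwise_cons.mp hsort).1 e he')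
          · exact Or.inl h2
        · exact Or.inr hx'
    · rw [greedyList, if_neg h] at hne ⊢
      rcases List.mem_cons.mp he with rfl | he'
      · exact ⟨acc, subset_greedy Ind rest acc, fun x hx => Or.inl hx, h⟩
      · exact greedy_max blk rest acc hsrest e he' hne

lemma sorted_of_ord (blk : α → ℕ) (l : List α) (hnd : l.Nodup)
    (hord : ∀ x y, x ∈ l → y ∈ l → blk x < blk y → l.idxOf x < l.idxOf y) :
    l.Pairwise (fun x y => blk x ≤ blk y) := by
  rw [List.pairwise_iff_get]
  intro i j hij
  by_contra hlt
  push_neg at hlt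
  have := hord _ _ (l.get_mem _) (l.get_mem _) hlt
  rw [List.get_idxOf hnd, List.get_idxOf hnd] at this
  omega

lemma max_card_eq
    (h_exch : ∀ X Y : Finset α, Ind X → Ind Y → X.card < Y.card →
      ∃ y ∈ Y \ X, Ind (insert y X))
    {S A B : Finset α} (hA : Ind A) (hB : Ind B)
    (hAS : A ⊆ S) (hBS : B ⊆ S)
    (hAmax : ∀ e ∈ S, e ∉ A → ¬ Ind (insert e A))
    (hBmax : ∀ e ∈ S, e ∉ B → ¬ Ind (insert e B)) : A.card = B.card := by
  rcases lt_trichotomy A.card B.card with h | h | h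
  · obtain ⟨y, hy, hind⟩ := h_exch A B hA hB h
    rw [Finset.mem_sdiff] at hy
    exact absurd hind (hAmax y (hBS hy.1) hy.2)
  · exact h
  · obtain ⟨y, hy, hind⟩ := h_exch B A hB hA h
    rw [Finset.mem_sdiff] at hy
    exact absurd hind (hBmax y (hAS hy.1) hy.2)

end Aux

/-- For a matroid whose ground set is partitioned into blocks (the fibers of
`blk`), any two greedy orderings `L, L'` that agree with the block partition
(elements of earlier blocks come first) produce greedy sets with the same number
of elements in each block. -/
theorem stmt14 {α : Type*} [DecidableEq α] (Ind : Finset α → Prop)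
    [DecidablePred Ind]
    (h_empty : Ind ∅)
    (h_down : ∀ X Y : Finset α, Y ⊆ X → Ind X → Ind Y)
    (h_exch : ∀ X Y : Finset α, Ind X → Ind Y → X.card < Y.card →
      ∃ y ∈ Y \ X, Ind (insert y X))
    (blk : α → ℕ)
    (L L' : List α) (hL : L.Nodup) (hL' : L'.Nodup) (hperm : L.Perm L')
    (hordL : ∀ x y, x ∈ L → y ∈ L → blk x < blk y → L.idxOf x < L.idxOf y)
    (hordL' : ∀ x y, x ∈ L' → y ∈ L' → blk x < blk y →
      L'.idxOf x < L'.idxOf y) :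
    ∀ i : ℕ, ((greedyList Ind L ∅).filter (fun x => blk x = i)).card =
      ((greedyList Ind L' ∅).filter (fun x => blk x = i)).card := by
  set G := greedyList Ind L ∅ with hGdef
  set G' := greedyList Ind L' ∅ with hG'def
  have hsortL := sorted_of_ord blk L hL hordL
  have hsortL' := sorted_of_ord blk L' hL' hordL'
  have hGsub : G ⊆ L.toFinset := by
    have := greedy_subset Ind L ∅; simpa using this
  have hG'sub : G' ⊆ L'.toFinset := by
    have := greedy_subset Ind L' ∅; simpa using this
  have hEq : L.toFinset = L'.toFinset := by
    ext x; simp [List.mem_toFinset, hperm.mem_iff]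
  have hGind : Ind G := greedy_ind Ind L ∅ h_empty
  have hG'ind : Ind G' := greedy_ind Ind L' ∅ h_empty
  have maxprop : ∀ (l : List α), l.Pairwise (fun x y => blk x ≤ blk y) →
      ∀ j, ∀ e ∈ l.toFinset.filter (fun x => blk x ≤ j),
        e ∉ (greedyList Ind l ∅).filter (fun x => blk x ≤ j) →
        ¬ Ind (insert e ((greedyList Ind l ∅).filter (fun x => blk x ≤ j))) := by
    intro l hsort j e he hnot hind
    rw [Finset.mem_filter, List.mem_toFinset] at he
    have heG : e ∉ greedyList Ind l ∅ := by
      intro hmem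
      exact hnot (Finset.mem_filter.mpr ⟨hmem, he.2⟩)
    obtain ⟨S, hS1, hS2, hS3⟩ := greedy_max Ind blk l ∅ hsort e he.1 heG
    apply hS3
    refine h_down _ _ (Finset.insert_subset_insert _ ?_) hind
    intro x hx
    rcases hS2 x hx with h0 | hle
    · simp at h0
    · exact Finset.mem_filter.mpr ⟨hS1 hx, hle.trans he.2⟩
  have key : ∀ j, (G.filter (fun x => blk x ≤ j)).card =
      (G'.filter (fun x => blk x ≤ j)).card := by
    intro j
    refine max_card_eq Ind h_exch (S := L.toFinset.filter (fun x => blk x ≤ j))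
      (h_down G _ (Finset.filter_subset _ _) hGind)
      (h_down G' _ (Finset.filter_subset _ _) hG'ind)
      (Finset.filter_subset_filter _ hGsub) ?_ (maxprop L hsortL j) ?_
    · rw [hEq]; exact Finset.filter_subset_filter _ hG'sub
    · rw [hEq]; exact maxprop L' hsortL' j
  have keylt : ∀ j, (G.filter (fun x => blk x < j)).card =
      (G'.filter (fun x => blk x < j)).card := by
    intro j
    cases j with
    | zero => simp only [Nat.not_lt_zero, Finset.filter_false, Finset.card_empty]
    | succ n => simpa [Nat.lt_succ_iff] using key n
  intro i
  have hsplit : ∀ (H : Finset α), (H.filter (fun x => blk x ≤ i)).card =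
      (H.filter (fun x => blk x = i)).card + (H.filter (fun x => blk x < i)).card := by
    intro H
    rw [← Finset.card_union_of_disjoint, ← Finset.filter_or]
    · congr 1
      apply Finset.filter_congr
      intro x _
      omega
    · rw [Finset.disjoint_left]
      intro x hx hx'
      simp only [Finset.mem_filter] at hx hx'
      omega
  have h := key i
  rw [hsplit G, hsplit G', keylt i] at h
  omega
end

section
/- For the UDP_min problem, the uniform pricing strategy (offering the same price to all items, optimized over all choices of uniform price) achieves revenue at least OPT/(1 + ln(v_m/v_1)), where v_1 ≤ ... ≤ v_m are the consumer valuations (assumed positive) and OPT is the optimal revenue over all price assignments. -/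
open Finset


private lemma harm (c : ℝ) (hc : 1 ≤ c) (k : ℕ) :
    ∑ j ∈ Finset.range k, min (1/c) (1/((j:ℝ)+1)) ≤
      if (k:ℝ) ≤ c then (k:ℝ)/c else 1 + Real.log ((k:ℝ)/c) := by
  have hc0 : 0 < c := lt_of_lt_of_le one_pos hc
  induction k with
  | zero => simp [hc0.le]
  | succ k ih =>
    rw [Finset.sum_range_succ]
    have hk1 : (0:ℝ) < (k:ℝ) + 1 := by positivity
    by_cases h1 : ((k:ℝ)+1) ≤ c
    · have h0 : (k:ℝ) ≤ c := by linarith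
      rw [if_pos (by push_cast; linarith)]
      rw [if_pos h0] at ih
      have hmin : min (1/c) (1/((k:ℝ)+1)) ≤ 1/c := min_le_left _ _
      have hadd : ((k:ℝ)+1)/c = (k:ℝ)/c + 1/c := add_div _ _ _
      push_cast
      linarith
    · rw [if_neg (by push_cast; exact h1)]
      push_cast
      have hmin : min (1/c) (1/((k:ℝ)+1)) ≤ 1/((k:ℝ)+1) := min_le_right _ _
      by_cases h0 : (k:ℝ) ≤ c
      · rw [if_pos h0] at ih
        have hlog : 1 - c/((k:ℝ)+1) ≤ Real.log (((k:ℝ)+1)/c) := by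
          have h := Real.log_le_sub_one_of_pos (show (0:ℝ) < c/((k:ℝ)+1) by positivity)
          have heq : Real.log (c/((k:ℝ)+1)) = - Real.log (((k:ℝ)+1)/c) := by
            rw [← Real.log_inv]
            congr 1
            field_simp
          rw [heq] at h
          linarith
        have hq : (k:ℝ)/c + (1 + c)/((k:ℝ)+1) ≤ 2 := by
          rw [div_add_div _ _ (ne_of_gt hc0) (ne_of_gt hk1), div_le_iff₀ (by positivity)]
          nlinarith [mul_nonpos_of_nonneg_of_nonpos (sub_nonneg.2 h0)
            (show c - ((k:ℝ)+1) ≤ 0 by linarith)]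
        have hsplit : (1 + c)/((k:ℝ)+1) = 1/((k:ℝ)+1) + c/((k:ℝ)+1) := add_div _ _ _
        linarith
      · rw [if_neg h0] at ih
        push_neg at h0
        have hkpos : (0:ℝ) < (k:ℝ) := lt_trans hc0 h0
        have hlog2 : 1/((k:ℝ)+1) ≤ Real.log ((k:ℝ)+1) - Real.log (k:ℝ) := by
          have h := Real.log_le_sub_one_of_pos (show (0:ℝ) < (k:ℝ)/((k:ℝ)+1) by positivity)
          rw [Real.log_div (ne_of_gt hkpos) (ne_of_gt hk1)] at h
          have : (k:ℝ)/((k:ℝ)+1) - 1 = -(1/((k:ℝ)+1)) := by field_simp; ring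
          linarith
        have e1 : Real.log (((k:ℝ)+1)/c) = Real.log ((k:ℝ)+1) - Real.log c :=
          Real.log_div (ne_of_gt hk1) (ne_of_gt hc0)
        have e2 : Real.log ((k:ℝ)/c) = Real.log (k:ℝ) - Real.log c :=
          Real.log_div (ne_of_gt hkpos) (ne_of_gt hc0)
        linarith

private lemma sum_bound (k : ℕ) (A : ℕ → ℝ) (R vmin vmax : ℝ)
    (h0 : 0 < vmin) (hvm : vmin ≤ vmax) (hRv : vmax ≤ R)
    (ha1 : ∀ j, j < k → vmin ≤ A j) (ha2 : ∀ j, j < k → A j ≤ vmax)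
    (ha3 : ∀ j, j < k → ((k:ℝ) - (j:ℝ)) * A j ≤ R) :
    ∑ j ∈ Finset.range k, A j ≤ R * (1 + Real.log (vmax / vmin)) := by
  have hvmax0 : 0 < vmax := lt_of_lt_of_le h0 hvm
  have hR0 : 0 < R := lt_of_lt_of_le hvmax0 hRv
  have hlog0 : 0 ≤ Real.log (vmax / vmin) := Real.log_nonneg ((one_le_div h0).2 hvm)
  rcases Nat.eq_zero_or_pos k with hk | hk
  · subst hk; simp; positivity
  set c := R / vmax with hcdef
  have hc : 1 ≤ c := (one_le_div hvmax0).2 hRv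
  have hc0 : 0 < c := lt_of_lt_of_le one_pos hc
  have hpt : ∀ j, j < k → A j ≤ R * min (1/c) (1/((k:ℝ) - j)) := by
    intro j hj
    have hkj : (1:ℝ) ≤ (k:ℝ) - j := by
      have : (j:ℝ) + 1 ≤ k := by exact_mod_cast hj
      linarith
    have h₁ : A j ≤ R * (1/c) := by
      have : R * (1/c) = vmax := by
        rw [hcdef]; field_simp
      rw [this]; exact ha2 j hj
    have h₂ : A j ≤ R * (1/((k:ℝ)-j)) := by
      rw [mul_one_div, le_div_iff₀ (by linarith)]
      have := ha3 j hj
      linarith [this]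
    rcases min_cases (1/c) (1/((k:ℝ)-j)) with ⟨he, _⟩ | ⟨he, _⟩ <;> rw [he] <;> assumption
  calc ∑ j ∈ Finset.range k, A j
      ≤ ∑ j ∈ Finset.range k, R * min (1/c) (1/((k:ℝ)-j)) :=
        Finset.sum_le_sum (fun j hj => hpt j (Finset.mem_range.1 hj))
    _ = R * ∑ j ∈ Finset.range k, min (1/c) (1/((k:ℝ)-j)) := by rw [Finset.mul_sum]
    _ = R * ∑ j ∈ Finset.range k, min (1/c) (1/((j:ℝ)+1)) := by
        congr 1
        rw [← Finset.sum_range_reflect (fun j => min (1/c) (1/((j:ℝ)+1))) k]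
        apply Finset.sum_congr rfl
        intro j hj
        have hj' := Finset.mem_range.1 hj
        have hcast : ((k - 1 - j : ℕ) : ℝ) + 1 = (k:ℝ) - j := by
          have h1 : j + 1 ≤ k := hj'
          have : (k - 1 - j : ℕ) = k - (j + 1) := by omega
          rw [this, Nat.cast_sub h1]
          push_cast
          ring
        rw [hcast]
    _ ≤ R * (if (k:ℝ) ≤ c then (k:ℝ)/c else 1 + Real.log ((k:ℝ)/c)) :=
        mul_le_mul_of_nonneg_left (harm c hc k) hR0.le
    _ ≤ R * (1 + Real.log (vmax / vmin)) := by
        apply mul_le_mul_of_nonneg_left _ hR0.le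
        split_ifs with h
        · have : (k:ℝ)/c ≤ 1 := (div_le_one hc0).2 h
          linarith
        · have hA0 := ha3 0 hk
          have hA1 := ha1 0 hk
          have hkR : (k:ℝ) * vmin ≤ R := by
            have hkpos : (0:ℝ) < (k:ℝ) := by exact_mod_cast hk
            have h1 : (k:ℝ) * A 0 ≤ R := by simpa using hA0
            nlinarith [mul_le_mul_of_nonneg_left hA1 hkpos.le]
          have hkc : (k:ℝ)/c ≤ vmax/vmin := by
            rw [hcdef, div_le_div_iff₀ (by positivity) h0]
            have he : vmax * (R / vmax) = R := by field_simp
            rw [he]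
            exact hkR
          have := Real.log_le_log (by positivity) hkc
          linarith

open scoped Classical in
/-- For the `UDP_min` problem with positive valuations, uniform pricing at some
consumer valuation `q` achieves revenue at least `OPT / (1 + ln (v_max / v_min))`:
for every price assignment `p`, there is a uniform price `q` (a consumer
valuation) with `revenue(p) ≤ (1 + ln (v_max / v_min)) · q · #{i : B i ≠ ∅, q ≤ v i}`. -/
theorem stmt15 (n m : ℕ)
    (B : Fin m → Finset (Fin n)) (v : Fin m → ℝ)
    (i0 imax : Fin m)
    (hmin : ∀ i, v i0 ≤ v i) (hmax : ∀ i, v i ≤ v imax)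
    (hpos : 0 < v i0)
    (p : Fin n → ℝ) (hp : ∀ x, 0 < p x) :
    ∃ q ∈ Set.range v,
      (∑ i : Fin m, if ∃ x ∈ B i, p x ≤ v i
          then sInf (p '' (B i : Set (Fin n))) else 0)
        ≤ (1 + Real.log (v imax / v i0)) *
          (q * ((Finset.univ.filter
            (fun i : Fin m => (B i).Nonempty ∧ q ≤ v i)).card : ℝ)) := by
  classical
  set vmin := v i0 with hvmindef
  have hvminpos : 0 < vmin := hpos
  set S : Finset (Fin m) := univ.filter (fun i => ∃ x ∈ B i, p x ≤ v i) with hSdef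
  set w : Fin m → ℝ := fun i => sInf (p '' (B i : Set (Fin n))) with hwdef
  set q' : Fin m → ℝ := fun i => max (w i) vmin with hq'def
  set Rev : ℝ → ℝ := fun q => q * ((Finset.univ.filter
    (fun i : Fin m => (B i).Nonempty ∧ q ≤ v i)).card : ℝ) with hRevdef
  have hQne : (univ.image v).Nonempty := ⟨v i0, Finset.mem_image_of_mem v (mem_univ i0)⟩
  obtain ⟨qs, hqsQ, hqsmax⟩ := Finset.exists_max_image (univ.image v) Rev hQne
  have hqsrange : qs ∈ Set.range v := by
    obtain ⟨i, _, rfl⟩ := Finset.mem_image.1 hqsQ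
    exact ⟨i, rfl⟩
  have hqs0 : 0 ≤ Rev qs := by
    have h1 : 0 ≤ Rev vmin := mul_nonneg hvminpos.le (Nat.cast_nonneg _)
    exact h1.trans (hqsmax vmin (Finset.mem_image_of_mem v (mem_univ i0)))
  have hSfact : ∀ i ∈ S, (B i).Nonempty ∧ 0 < w i ∧ w i ≤ v i := by
    intro i hi
    obtain ⟨x, hxB, hxle⟩ := (Finset.mem_filter.1 hi).2
    have hne : (p '' (B i : Set (Fin n))).Nonempty := ⟨p x, x, hxB, rfl⟩
    have hfin : (p '' (B i : Set (Fin n))).Finite := ((B i).finite_toSet).image p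
    have hbdd : BddBelow (p '' (B i : Set (Fin n))) := hfin.bddBelow
    refine ⟨⟨x, hxB⟩, ?_, le_trans (csInf_le hbdd ⟨x, hxB, rfl⟩) hxle⟩
    obtain ⟨y, -, hyeq⟩ := hne.csInf_mem hfin
    show 0 < sInf (p '' (B i : Set (Fin n)))
    rw [← hyeq]
    exact hp y
  have keyA : ∀ t : ℝ, 0 < t →
      t * ((S.filter (fun i => t ≤ q' i)).card : ℝ) ≤ Rev qs := by
    intro t ht
    rcases (S.filter (fun i => t ≤ q' i)).eq_empty_or_nonempty with hT | hT
    · rw [hT]; simpa using hqs0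
    obtain ⟨i1, hi1, hmin1⟩ := Finset.exists_min_image _ v hT
    have hi1S : i1 ∈ S := (Finset.mem_filter.1 hi1).1
    have hi1t : t ≤ q' i1 := (Finset.mem_filter.1 hi1).2
    obtain ⟨hB1, hw1pos, hw1le⟩ := hSfact i1 hi1S
    have htv : t ≤ v i1 := le_trans hi1t (max_le hw1le (hmin i1))
    have hsub : S.filter (fun i => t ≤ q' i) ⊆
        univ.filter (fun i => (B i).Nonempty ∧ v i1 ≤ v i) := by
      intro i hi
      have hiS : i ∈ S := (Finset.mem_filter.1 hi).1
      exact Finset.mem_filter.2 ⟨mem_univ i, (hSfact i hiS).1, hmin1 i hi⟩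
    have hcard := Finset.card_le_card hsub
    have hstep : t * ((S.filter (fun i => t ≤ q' i)).card : ℝ) ≤ Rev (v i1) := by
      rw [hRevdef]
      exact mul_le_mul htv (by exact_mod_cast hcard) (Nat.cast_nonneg _)
        (le_trans hvminpos.le (hmin i1))
    exact hstep.trans (hqsmax (v i1) (Finset.mem_image_of_mem v (mem_univ i1)))
  have hsumeq : (∑ i : Fin m, if ∃ x ∈ B i, p x ≤ v i
      then sInf (p '' (B i : Set (Fin n))) else 0) = ∑ i ∈ S, w i :=
    (Finset.sum_filter _ _).symm
  have hfac : 0 ≤ 1 + Real.log (v imax / vmin) := by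
    have := Real.log_nonneg ((one_le_div hvminpos).2 (hmin imax))
    linarith
  refine ⟨qs, hqsrange, ?_⟩
  rw [hsumeq]
  show ∑ i ∈ S, w i ≤ (1 + Real.log (v imax / vmin)) * Rev qs
  rcases S.eq_empty_or_nonempty with hSe | hSne
  · rw [hSe]
    simpa using mul_nonneg hfac hqs0
  set k := S.card with hkdef
  have hk : 0 < k := Finset.card_pos.2 hSne
  obtain ⟨i2, hi2S, hmax2⟩ := Finset.exists_max_image S v hSne
  have hvm2 : vmin ≤ v i2 := hmin i2
  have hRv : v i2 ≤ Rev qs := by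
    have hmem2 : i2 ∈ univ.filter (fun i : Fin m => (B i).Nonempty ∧ v i2 ≤ v i) :=
      Finset.mem_filter.2 ⟨mem_univ _, (hSfact i2 hi2S).1, le_refl _⟩
    have h1 : (1:ℝ) ≤ ((univ.filter
        (fun i : Fin m => (B i).Nonempty ∧ v i2 ≤ v i)).card : ℝ) := by
      exact_mod_cast Finset.card_pos.2 ⟨i2, hmem2⟩
    have h2 : v i2 * 1 ≤ Rev (v i2) := by
      rw [hRevdef]
      exact mul_le_mul_of_nonneg_left h1 (by linarith)
    have h3 := hqsmax (v i2) (Finset.mem_image_of_mem v (mem_univ i2))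
    rw [mul_one] at h2
    exact h2.trans h3
  -- sorting the buyers' (adjusted) payments
  let e := S.equivFin
  let g : Fin k → ℝ := fun j => q' ((e.symm j : Fin m))
  let σ := Tuple.sort g
  have hmono : Monotone (g ∘ σ) := Tuple.monotone_sort g
  set A : ℕ → ℝ := fun j => if h : j < k then g (σ ⟨j, h⟩) else 0 with hAdef
  have hmemS : ∀ j : Fin k, ((e.symm j : Fin m)) ∈ S := fun j => (e.symm j).2
  have hq'facts : ∀ i ∈ S, vmin ≤ q' i ∧ q' i ≤ v i2 := by
    intro i hi
    obtain ⟨-, -, hwle⟩ := hSfact i hi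
    exact ⟨le_max_right _ _, le_trans (max_le (hwle.trans (hmax2 i hi)) (hvm2.trans (le_refl _)))
      (le_refl _)⟩
  have hsum2 : ∑ i ∈ S, q' i = ∑ j ∈ Finset.range k, A j := by
    rw [← Fin.sum_univ_eq_sum_range]
    have h1 : ∀ j : Fin k, A (j : ℕ) = g (σ j) := by
      intro j
      simp only [hAdef, j.isLt, dif_pos]
    rw [Finset.sum_congr rfl (fun j _ => h1 j)]
    rw [Equiv.sum_comp σ g]
    rw [← Finset.sum_coe_sort S q']
    exact (Equiv.sum_comp e.symm (fun i : S => q' i)).symm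
  have ha1 : ∀ j, j < k → vmin ≤ A j := by
    intro j hj
    rw [hAdef]
    simp only [dif_pos hj]
    exact (hq'facts _ (hmemS _)).1
  have ha2 : ∀ j, j < k → A j ≤ v i2 := by
    intro j hj
    rw [hAdef]
    simp only [dif_pos hj]
    exact (hq'facts _ (hmemS _)).2
  have ha3 : ∀ j, j < k → ((k:ℝ) - (j:ℝ)) * A j ≤ Rev qs := by
    intro j hj
    have hAj : A j = g (σ ⟨j, hj⟩) := dif_pos hj
    set t := g (σ ⟨j, hj⟩) with htdef
    have htpos : 0 < t := lt_of_lt_of_le hvminpos (hq'facts _ (hmemS _)).1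
    have hinj : Function.Injective (fun j' : Fin k => ((e.symm (σ j') : Fin m))) := by
      intro a b hab
      exact σ.injective (e.symm.injective (Subtype.ext hab))
    have hsubmap : ∀ j' ∈ Finset.Ici (⟨j, hj⟩ : Fin k),
        ((e.symm (σ j') : Fin m)) ∈ S.filter (fun i => t ≤ q' i) := by
      intro j' hj'
      refine Finset.mem_filter.2 ⟨hmemS _, ?_⟩
      exact hmono (Finset.mem_Ici.1 hj')
    have hcard : k - j ≤ (S.filter (fun i => t ≤ q' i)).card := by
      have hIci : (Finset.Ici (⟨j, hj⟩ : Fin k)).card = k - j :=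
        Fin.card_Ici (⟨j, hj⟩ : Fin k)
      calc k - j = (Finset.Ici (⟨j, hj⟩ : Fin k)).card := hIci.symm
        _ ≤ _ := Finset.card_le_card_of_injOn _ hsubmap (hinj.injOn)
    have hcast : ((k:ℝ) - j) ≤ ((S.filter (fun i => t ≤ q' i)).card : ℝ) := by
      calc (k:ℝ) - j = ((k - j : ℕ) : ℝ) := by rw [Nat.cast_sub hj.le]
        _ ≤ _ := by exact_mod_cast hcard
    rw [hAj, mul_comm]
    calc t * ((k:ℝ) - j) ≤ t * ((S.filter (fun i => t ≤ q' i)).card : ℝ) :=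
          mul_le_mul_of_nonneg_left hcast htpos.le
      _ ≤ Rev qs := keyA t htpos
  have hsb := sum_bound k A (Rev qs) vmin (v i2) hvminpos hvm2 hRv ha1 ha2 ha3
  have hw_le_q' : ∑ i ∈ S, w i ≤ ∑ i ∈ S, q' i :=
    Finset.sum_le_sum (fun i _ => le_max_left _ _)
  have hlog2 : Real.log (v i2 / vmin) ≤ Real.log (v imax / vmin) :=
    Real.log_le_log (div_pos (lt_of_lt_of_le hvminpos hvm2) hvminpos) (by gcongr; exact hmax i2)
  calc ∑ i ∈ S, w i ≤ ∑ i ∈ S, q' i := hw_le_q'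
    _ = ∑ j ∈ Finset.range k, A j := hsum2
    _ ≤ Rev qs * (1 + Real.log (v i2 / vmin)) := hsb
    _ ≤ Rev qs * (1 + Real.log (v imax / vmin)) := by
        apply mul_le_mul_of_nonneg_left _ hqs0
        linarith
    _ = (1 + Real.log (v imax / vmin)) * Rev qs := mul_comm _ _
end

section
/- For the UDP_min problem with m consumers, the uniform pricing strategy achieves revenue at least OPT/(1 + ln m). -/
open Finset

open scoped Classical in
lemma rank_sum {α : Type*} [DecidableEq α] (v : α → ℝ) (T : Finset α) :
    ∑ i ∈ T, (1:ℝ) / ((T.filter (fun j => v i ≤ v j)).card) ≤ (harmonic T.card : ℝ) := by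
  induction T using Finset.strongInductionOn with
  | _ T ih =>
    rcases T.eq_empty_or_nonempty with rfl | hT
    · simp
    obtain ⟨i0, hi0, hmin⟩ := T.exists_min_image v hT
    have hins : T = insert i0 (T.erase i0) := (Finset.insert_erase hi0).symm
    rw [hins, Finset.sum_insert (Finset.notMem_erase _ _)]
    have hcard : T.card = (T.erase i0).card + 1 := by
      have : 0 < T.card := Finset.card_pos.mpr hT
      rw [Finset.card_erase_of_mem hi0]
      omega
    have h1 : (T.filter (fun j => v i0 ≤ v j)) = T := by
      apply Finset.filter_true_of_mem
      intro j hj; exact hmin j hj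
    have h2 : ∀ i ∈ T.erase i0,
        (1:ℝ) / ((T.filter (fun j => v i ≤ v j)).card)
          ≤ (1:ℝ) / (((T.erase i0).filter (fun j => v i ≤ v j)).card) := by
      intro i hi
      have hpos : 0 < ((T.erase i0).filter (fun j => v i ≤ v j)).card :=
        Finset.card_pos.mpr ⟨i, Finset.mem_filter.mpr ⟨hi, le_refl _⟩⟩
      apply one_div_le_one_div_of_le
      · exact_mod_cast hpos
      · exact_mod_cast Finset.card_le_card
          (Finset.filter_subset_filter _ (Finset.erase_subset _ _))
    have h3 : ∑ i ∈ T.erase i0, (1:ℝ) / ((T.filter (fun j => v i ≤ v j)).card)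
        ≤ (harmonic (T.erase i0).card : ℝ) :=
      le_trans (Finset.sum_le_sum h2)
        (ih _ (Finset.erase_ssubset hi0))
    have hh : (harmonic T.card : ℝ)
        = (harmonic (T.erase i0).card : ℝ) + 1 / (T.card : ℝ) := by
      rw [hcard, harmonic_succ]
      push_cast
      rw [one_div]
    rw [← hins] at *
    rw [h1, hh]
    linarith

open scoped Classical in
/-- For the `UDP_min` problem with `m` consumers (positive valuations), uniform
pricing at some consumer valuation `q` achieves revenue at least
`OPT / (1 + ln m)`: for every price assignment `p`, there is a uniform price
`q` with `revenue(p) ≤ (1 + ln m) · q · #{i : B i ≠ ∅, q ≤ v i}`. -/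
theorem stmt16 (n m : ℕ) (hm : 0 < m)
    (B : Fin m → Finset (Fin n)) (v : Fin m → ℝ) (hv : ∀ i, 0 < v i)
    (p : Fin n → ℝ) (hp : ∀ x, 0 < p x) :
    ∃ q ∈ Set.range v,
      (∑ i : Fin m, if ∃ x ∈ B i, p x ≤ v i
          then sInf (p '' (B i : Set (Fin n))) else 0)
        ≤ (1 + Real.log m) *
          (q * ((Finset.univ.filter
            (fun i : Fin m => (B i).Nonempty ∧ q ≤ v i)).card : ℝ)) := by
  set T : Finset (Fin m) := Finset.univ.filter (fun i => (B i).Nonempty) with hT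
  -- revenue is at most the sum of valuations over T
  have hrev : (∑ i : Fin m, if ∃ x ∈ B i, p x ≤ v i
      then sInf (p '' (B i : Set (Fin n))) else 0) ≤ ∑ i ∈ T, v i := by
    rw [hT, Finset.sum_filter]
    apply Finset.sum_le_sum
    intro i _
    by_cases h : ∃ x ∈ B i, p x ≤ v i
    · obtain ⟨x, hx, hxv⟩ := h
      rw [if_pos ⟨x, hx, hxv⟩, if_pos ⟨x, hx⟩]
      calc sInf (p '' (B i : Set (Fin n))) ≤ p x :=
            csInf_le (((B i).finite_toSet.image p).bddBelow) ⟨x, hx, rfl⟩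
        _ ≤ v i := hxv
    · rw [if_neg h]
      split
      · exact (hv i).le
      · exact le_refl 0
  rcases T.eq_empty_or_nonempty with hTe | hTne
  · -- nobody can buy anything
    refine ⟨v ⟨0, hm⟩, ⟨_, rfl⟩, ?_⟩
    have hfe : Finset.univ.filter
        (fun i : Fin m => (B i).Nonempty ∧ v ⟨0, hm⟩ ≤ v i) = ∅ := by
      rw [Finset.filter_eq_empty_iff]
      intro i _ hi
      have : i ∈ T := by rw [hT]; exact Finset.mem_filter.mpr ⟨Finset.mem_univ _, hi.1⟩
      rw [hTe] at this; exact absurd this (Finset.notMem_empty _)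
    rw [hfe]
    simp only [Finset.card_empty, Nat.cast_zero, mul_zero]
    refine le_trans hrev ?_
    rw [hTe]; simp
  · -- pick the consumer maximizing v i * rank i
    obtain ⟨i0, hi0, hmax⟩ :=
      T.exists_max_image (fun i => v i * ((T.filter (fun j => v i ≤ v j)).card : ℝ)) hTne
    set M : ℝ := v i0 * ((T.filter (fun j => v i0 ≤ v j)).card : ℝ) with hM
    have hMpos : 0 < M := by
      apply mul_pos (hv i0)
      have hc : 0 < (T.filter (fun j => v i0 ≤ v j)).card :=
        Finset.card_pos.mpr ⟨i0, Finset.mem_filter.mpr ⟨hi0, le_refl (v i0)⟩⟩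
      exact_mod_cast hc
    -- each v i ≤ M / rank i
    have hkey : ∑ i ∈ T, v i ≤ M * (harmonic T.card : ℝ) := by
      calc ∑ i ∈ T, v i
          ≤ ∑ i ∈ T, M * ((1:ℝ) / ((T.filter (fun j => v i ≤ v j)).card)) := by
            apply Finset.sum_le_sum
            intro i hi
            have hc : 0 < (T.filter (fun j => v i ≤ v j)).card :=
              Finset.card_pos.mpr ⟨i, Finset.mem_filter.mpr ⟨hi, le_refl (v i)⟩⟩
            have hrpos : (0:ℝ) < ((T.filter (fun j => v i ≤ v j)).card : ℝ) := by
              exact_mod_cast hc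
            rw [mul_one_div, le_div_iff₀ hrpos]
            exact hmax i hi
        _ = M * ∑ i ∈ T, (1:ℝ) / ((T.filter (fun j => v i ≤ v j)).card) := by
            rw [Finset.mul_sum]
        _ ≤ M * (harmonic T.card : ℝ) := by
            apply mul_le_mul_of_nonneg_left (rank_sum v T) hMpos.le
    have hharm : (harmonic T.card : ℝ) ≤ 1 + Real.log m := by
      refine le_trans (harmonic_le_one_add_log T.card) ?_
      have h1 : (1:ℕ) ≤ T.card := Finset.card_pos.mpr hTne
      have h2 : T.card ≤ m := le_trans (Finset.card_le_card (Finset.subset_univ T)) (by simp)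
      have := Real.log_le_log (by exact_mod_cast h1) (by exact_mod_cast h2 : (T.card:ℝ) ≤ m)
      linarith
    refine ⟨v i0, ⟨i0, rfl⟩, ?_⟩
    have hfilter : Finset.univ.filter (fun i : Fin m => (B i).Nonempty ∧ v i0 ≤ v i)
        = T.filter (fun j => v i0 ≤ v j) := by
      rw [hT, Finset.filter_filter]
    rw [hfilter]
    calc (∑ i : Fin m, if ∃ x ∈ B i, p x ≤ v i
            then sInf (p '' (B i : Set (Fin n))) else 0)
        ≤ ∑ i ∈ T, v i := hrev
      _ ≤ M * (harmonic T.card : ℝ) := hkey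
      _ ≤ M * (1 + Real.log m) := mul_le_mul_of_nonneg_left hharm hMpos.le
      _ = (1 + Real.log m) * (v i0 * ((T.filter (fun j => v i0 ≤ v j)).card : ℝ)) := by
            rw [hM]; ring
end

section
/- In the multi-period capacitated setting with a regular discrete choice model, the marginal monotonicity of the value function implies level monotonicity in capacity: if Δ𝒥_{t−1}(q−1) ≥ Δ𝒥_{t−1}(q) then ℓ*_t(q) ≤ ℓ*_t(q−1), i.e., the optimal revenue-ordered threshold index at time-to-go t is non-increasing as the remaining capacity q increases. More precisely, with δ_1 ≤ δ_2 and δ_1 + r_k ≥ 0, one has min 𝓛*(δ_2) ≤ min 𝓛*(δ_1). -/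
open Finset

open scoped Classical in
/-- Multi-period monotonicity lemma: for a regular discrete choice model with
distinct revenues `rv 1 < ... < rv k`, let `g δ ℓ` be the expected revenue of the
revenue-ordered assortment `{x : rv ℓ ≤ r x}` when `δ` is added to all revenues.
If `δ₁ ≤ δ₂` with `δ₁ + rv k ≥ 0`, and `ℓ₁` (resp. `ℓ₂`) is the minimum maximiser
of `g δ₁` (resp. `g δ₂`) over `[k]`, then `ℓ₂ ≤ ℓ₁`. -/
theorem stmt17 {α : Type*} [Fintype α] [DecidableEq α]
    (P : α → Finset α → ℝ) (r : α → ℝ)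
    (hr : ∀ x, 0 < r x)
    (h_nonneg : ∀ (x : α) (S : Finset α), 0 ≤ P x S)
    (h_vanish : ∀ (x : α) (S : Finset α), x ∉ S → P x S = 0)
    (h_sum : ∀ S : Finset α, ∑ x ∈ S, P x S ≤ 1)
    (h_reg : ∀ S S' : Finset α, S ⊆ S' → ∀ x ∈ S, P x S' ≤ P x S)
    (h_reg0 : ∀ S S' : Finset α, S ⊆ S' →
      1 - ∑ x ∈ S', P x S' ≤ 1 - ∑ x ∈ S, P x S)
    (k : ℕ) (hk : 1 ≤ k) (rv : ℕ → ℝ)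
    (hrvmono : ∀ i j, 1 ≤ i → i < j → j ≤ k → rv i < rv j)
    (hvals : Finset.univ.image r = (Finset.Icc 1 k).image rv)
    (δ₁ δ₂ : ℝ) (hδ : δ₁ ≤ δ₂) (hδ₁ : 0 ≤ δ₁ + rv k)
    (g : ℝ → ℕ → ℝ)
    (hg : ∀ (δ : ℝ) (ℓ : ℕ), g δ ℓ =
      ∑ x ∈ Finset.univ.filter (fun x => rv ℓ ≤ r x),
        P x (Finset.univ.filter (fun x => rv ℓ ≤ r x)) * (r x + δ))
    (ℓ₁ ℓ₂ : ℕ)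
    (hℓ₁mem : ℓ₁ ∈ Finset.Icc 1 k) (hℓ₂mem : ℓ₂ ∈ Finset.Icc 1 k)
    (hℓ₁max : ∀ ℓ ∈ Finset.Icc 1 k, g δ₁ ℓ ≤ g δ₁ ℓ₁)
    (hℓ₁min : ∀ ℓ ∈ Finset.Icc 1 k, g δ₁ ℓ = g δ₁ ℓ₁ → ℓ₁ ≤ ℓ)
    (hℓ₂max : ∀ ℓ ∈ Finset.Icc 1 k, g δ₂ ℓ ≤ g δ₂ ℓ₂)
    (hℓ₂min : ∀ ℓ ∈ Finset.Icc 1 k, g δ₂ ℓ = g δ₂ ℓ₂ → ℓ₂ ≤ ℓ) :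
    ℓ₂ ≤ ℓ₁ := by
  by_contra hcon
  push_neg at hcon
  -- hcon : ℓ₁ < ℓ₂
  simp only [Finset.mem_Icc] at hℓ₁mem hℓ₂mem
  set S₁ := Finset.univ.filter (fun x => rv ℓ₁ ≤ r x) with hS₁
  set S₂ := Finset.univ.filter (fun x => rv ℓ₂ ≤ r x) with hS₂
  have hrvlt : rv ℓ₁ < rv ℓ₂ := hrvmono ℓ₁ ℓ₂ hℓ₁mem.1 hcon hℓ₂mem.2
  have hsub : S₂ ⊆ S₁ := by
    intro x hx
    simp only [hS₁, hS₂, Finset.mem_filter] at hx ⊢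
    exact ⟨hx.1, le_trans hrvlt.le hx.2⟩
  have hQ : ∑ x ∈ S₂, P x S₂ ≤ ∑ x ∈ S₁, P x S₁ := by
    have := h_reg0 S₂ S₁ hsub
    linarith
  have hexp : ∀ δ : ℝ, g δ ℓ₁ = (∑ x ∈ S₁, P x S₁ * r x) + δ * ∑ x ∈ S₁, P x S₁ := by
    intro δ
    rw [hg δ ℓ₁, Finset.mul_sum]
    rw [← Finset.sum_add_distrib]
    exact Finset.sum_congr rfl fun x _ => by ring
  have hexp2 : ∀ δ : ℝ, g δ ℓ₂ = (∑ x ∈ S₂, P x S₂ * r x) + δ * ∑ x ∈ S₂, P x S₂ := by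
    intro δ
    rw [hg δ ℓ₂, Finset.mul_sum]
    rw [← Finset.sum_add_distrib]
    exact Finset.sum_congr rfl fun x _ => by ring
  have h1 : g δ₁ ℓ₂ ≤ g δ₁ ℓ₁ := hℓ₁max ℓ₂ (Finset.mem_Icc.mpr hℓ₂mem)
  have h2 : g δ₂ ℓ₁ ≤ g δ₂ ℓ₂ := hℓ₂max ℓ₁ (Finset.mem_Icc.mpr hℓ₁mem)
  have heq : g δ₂ ℓ₁ = g δ₂ ℓ₂ := by
    apply le_antisymm h2
    rw [hexp δ₂, hexp2 δ₂]
    rw [hexp δ₁, hexp2 δ₁] at h1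
    nlinarith [mul_nonneg (sub_nonneg.mpr hδ) (sub_nonneg.mpr hQ)]
  exact absurd (hℓ₂min ℓ₁ (Finset.mem_Icc.mpr hℓ₁mem) heq) (not_le.mpr hcon)
end
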